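/- If φ is an Lμ-formula (without free propositional variables) with ⊢_Lμ φ, then there is a derivation of φ in the Lμ-calculus consisting only of Lμ-formulas, i.e. a derivation in which no formula has a free propositional variable. -/

import Mathlib

open FirstOrder Set

namespace GLMu

/-! ## Barred propositional variables -/

/-- Barred propositional variables: `Sum.inl X` is `X`, `Sum.inr X` is `X̄`. -/
def bar {V : Type*} : V ⊕ V → V ⊕ V := Sum.elim Sum.inr Sum.inl

def unbar {V : Type*} : V ⊕ V → V := Sum.elim id id

/-! ## First-order literals -/

/-- First-order literals with equality: atomic formulas and their negations. -/
inductive Lit (L : Language) (𝒳 : Type*) where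
  | eq (t₁ t₂ : L.Term 𝒳)
  | ne (t₁ t₂ : L.Term 𝒳)
  | rel {n : ℕ} (R : L.Relations n) (ts : Fin n → L.Term 𝒳)
  | nrel {n : ℕ} (R : L.Relations n) (ts : Fin n → L.Term 𝒳)

namespace Lit

variable {L : Language} {𝒳 : Type*}

/-- Negation of a literal. -/
def neg : Lit L 𝒳 → Lit L 𝒳
  | .eq t₁ t₂ => .ne t₁ t₂
  | .ne t₁ t₂ => .eq t₁ t₂
  | .rel R ts => .nrel R ts
  | .nrel R ts => .rel R ts

variable {M : Type*} [L.Structure M]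

/-- Semantics of a literal: the set of states in which it is true. -/
def sem : Lit L 𝒳 → Set (𝒳 → M)
  | .eq t₁ t₂ => {ω | t₁.realize ω = t₂.realize ω}
  | .ne t₁ t₂ => {ω | t₁.realize ω ≠ t₂.realize ω}
  | .rel R ts => {ω | Language.Structure.RelMap R (fun i => (ts i).realize ω)}
  | .nrel R ts => {ω | ¬ Language.Structure.RelMap R (fun i => (ts i).realize ω)}

end Lit

/-- The set of object variables occurring in a term. -/
def tvars {L : Language} {𝒳 : Type*} : L.Term 𝒳 → Set 𝒳
  | .var x => {x}
  | .func _ ts => ⋃ i, tvars (ts i)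

/-- The set of object variables occurring in a literal. -/
def Lit.ovars {L : Language} {𝒳 : Type*} : Lit L 𝒳 → Set 𝒳
  | .eq t₁ t₂ => tvars t₁ ∪ tvars t₂
  | .ne t₁ t₂ => tvars t₁ ∪ tvars t₂
  | .rel _ ts => ⋃ i, tvars (ts i)
  | .nrel _ ts => ⋃ i, tvars (ts i)

/-! ## Syntax of the first-order modal μ-calculus -/

/-- Formulas of the first-order modal μ-calculus `Lμ_𝒱` (raw syntax). -/
inductive MuF (L : Language) (𝒳 Act V : Type*) where
  | lit (p : Lit L 𝒳)
  | var (X : V ⊕ V)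
  | or (φ₁ φ₂ : MuF L 𝒳 Act V)
  | and (φ₁ φ₂ : MuF L 𝒳 Act V)
  | dia (a : Act) (φ : MuF L 𝒳 Act V)
  | box (a : Act) (φ : MuF L 𝒳 Act V)
  | mu (X : V ⊕ V) (φ : MuF L 𝒳 Act V)
  | nu (X : V ⊕ V) (φ : MuF L 𝒳 Act V)

namespace MuF

variable {L : Language} {𝒳 Act V : Type*}

/-- The propositional variables (in `𝒱̄`) mentioned anywhere in a formula. -/
def mentions : MuF L 𝒳 Act V → Set (V ⊕ V)
  | .lit _ => ∅
  | .var X => {X}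
  | .or φ ψ => φ.mentions ∪ ψ.mentions
  | .and φ ψ => φ.mentions ∪ ψ.mentions
  | .dia _ φ => φ.mentions
  | .box _ φ => φ.mentions
  | .mu X φ => {X} ∪ φ.mentions
  | .nu X φ => {X} ∪ φ.mentions

/-- Well-formedness: in `μX.ψ` and `νX.ψ` the body `ψ` may not mention `X̄`.
This is the constraint built into the grammar of `Lμ_𝒱`. -/
def WF : MuF L 𝒳 Act V → Prop
  | .lit _ => True
  | .var _ => True
  | .or φ ψ => φ.WF ∧ ψ.WF
  | .and φ ψ => φ.WF ∧ ψ.WF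
  | .dia _ φ => φ.WF
  | .box _ φ => φ.WF
  | .mu X φ => bar X ∉ φ.mentions ∧ φ.WF
  | .nu X φ => bar X ∉ φ.mentions ∧ φ.WF

/-- The free propositional variables of a formula. -/
def freeVars : MuF L 𝒳 Act V → Set (V ⊕ V)
  | .lit _ => ∅
  | .var X => {X}
  | .or φ ψ => φ.freeVars ∪ ψ.freeVars
  | .and φ ψ => φ.freeVars ∪ ψ.freeVars
  | .dia _ φ => φ.freeVars
  | .box _ φ => φ.freeVars
  | .mu X φ => φ.freeVars \ {X, bar X}
  | .nu X φ => φ.freeVars \ {X, bar X}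

/-- The propositional variables bound by a fixpoint operator somewhere in a formula. -/
def boundVars : MuF L 𝒳 Act V → Set (V ⊕ V)
  | .lit _ => ∅
  | .var _ => ∅
  | .or φ ψ => φ.boundVars ∪ ψ.boundVars
  | .and φ ψ => φ.boundVars ∪ ψ.boundVars
  | .dia _ φ => φ.boundVars
  | .box _ φ => φ.boundVars
  | .mu X φ => {X} ∪ φ.boundVars
  | .nu X φ => {X} ∪ φ.boundVars

/-- The list of bound propositional variables, with multiplicity. -/
def boundList : MuF L 𝒳 Act V → List (V ⊕ V)
  | .lit _ => []
  | .var _ => []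
  | .or φ ψ => φ.boundList ++ ψ.boundList
  | .and φ ψ => φ.boundList ++ ψ.boundList
  | .dia _ φ => φ.boundList
  | .box _ φ => φ.boundList
  | .mu X φ => X :: φ.boundList
  | .nu X φ => X :: φ.boundList

/-- Every propositional variable is bound at most once. -/
def BoundOnce (φ : MuF L 𝒳 Act V) : Prop := (φ.boundList.map unbar).Nodup

/-- The transition symbols occurring in a formula. -/
def acts : MuF L 𝒳 Act V → Set Act
  | .lit _ => ∅
  | .var _ => ∅
  | .or φ ψ => φ.acts ∪ ψ.acts
  | .and φ ψ => φ.acts ∪ ψ.acts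
  | .dia a φ => {a} ∪ φ.acts
  | .box a φ => {a} ∪ φ.acts
  | .mu _ φ => φ.acts
  | .nu _ φ => φ.acts

/-- The complement `φ̄` of an `Lμ_𝒱`-formula. -/
def compl : MuF L 𝒳 Act V → MuF L 𝒳 Act V
  | .lit p => .lit p.neg
  | .var X => .var (bar X)
  | .or φ ψ => .and φ.compl ψ.compl
  | .and φ ψ => .or φ.compl ψ.compl
  | .dia a φ => .box a φ.compl
  | .box a φ => .dia a φ.compl
  | .mu X φ => .nu (bar X) φ.compl
  | .nu X φ => .mu (bar X) φ.compl

/-- Implication `φ → ψ`, an abbreviation for `φ̄ ∨ ψ`. -/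
def imp (φ ψ : MuF L 𝒳 Act V) : MuF L 𝒳 Act V := .or φ.compl ψ

/-- Bi-implication `φ ↔ ψ`. -/
def iff (φ ψ : MuF L 𝒳 Act V) : MuF L 𝒳 Act V := .and (imp φ ψ) (imp ψ φ)

variable [DecidableEq V]

/-- Substitution `φ[ψ/X]` of `ψ` for all free occurrences of the propositional
variable `X` (and of `ψ̄` for all free occurrences of its complement). -/
def subst (X : V ⊕ V) (ψ : MuF L 𝒳 Act V) : MuF L 𝒳 Act V → MuF L 𝒳 Act V
  | .lit p => .lit p
  | .var Y => if Y = X then ψ else if Y = bar X then ψ.compl else .var Y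
  | .or φ₁ φ₂ => .or (subst X ψ φ₁) (subst X ψ φ₂)
  | .and φ₁ φ₂ => .and (subst X ψ φ₁) (subst X ψ φ₂)
  | .dia a φ => .dia a (subst X ψ φ)
  | .box a φ => .box a (subst X ψ φ)
  | .mu Y φ => if X = Y ∨ X = bar Y then .mu Y φ else .mu Y (subst X ψ φ)
  | .nu Y φ => if X = Y ∨ X = bar Y then .nu Y φ else .nu Y (subst X ψ φ)

/-- `X` is free for `ψ` in `φ`: no free occurrence of `X` in `φ` is in the scope of a
fixpoint operator binding a free propositional variable of `ψ`. -/
def FreeFor (X : V ⊕ V) (ψ : MuF L 𝒳 Act V) : MuF L 𝒳 Act V → Prop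
  | .lit _ => True
  | .var _ => True
  | .or φ₁ φ₂ => FreeFor X ψ φ₁ ∧ FreeFor X ψ φ₂
  | .and φ₁ φ₂ => FreeFor X ψ φ₁ ∧ FreeFor X ψ φ₂
  | .dia _ φ => FreeFor X ψ φ
  | .box _ φ => FreeFor X ψ φ
  | .mu Y φ => X = Y ∨ X = bar Y ∨
      (((X ∈ φ.freeVars ∨ bar X ∈ φ.freeVars) → (Y ∉ ψ.freeVars ∧ bar Y ∉ ψ.freeVars)) ∧
        FreeFor X ψ φ)
  | .nu Y φ => X = Y ∨ X = bar Y ∨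
      (((X ∈ φ.freeVars ∨ bar X ∈ φ.freeVars) → (Y ∉ ψ.freeVars ∧ bar Y ∉ ψ.freeVars)) ∧
        FreeFor X ψ φ)

end MuF

/-! ## Semantics of the first-order modal μ-calculus -/

section MuSem

variable {L : Language} {𝒳 Act V : Type*} {M : Type*} [L.Structure M] [DecidableEq V]

/-- The extension of a valuation `Ω : 𝒱 → 𝒫(𝒮)` to barred propositional variables,
with `Ω(X̄) = 𝒮 ∖ Ω(X)`. -/
def barVal (Ω : V → Set (𝒳 → M)) : V ⊕ V → Set (𝒳 → M) :=
  Sum.elim Ω (fun x => (Ω x)ᶜ)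

/-- The modified valuation `Ω[E/X]` for `X ∈ 𝒱̄`. -/
def modif (Ω : V → Set (𝒳 → M)) : V ⊕ V → Set (𝒳 → M) → V → Set (𝒳 → M)
  | .inl x, E => Function.update Ω x E
  | .inr x, E => Function.update Ω x Eᶜ

variable (tr : Act → (𝒳 → M) → (𝒳 → M) → Prop)

/-- Denotational semantics of `Lμ_𝒱`-formulas. -/
def MuF.sem : MuF L 𝒳 Act V → (V → Set (𝒳 → M)) → Set (𝒳 → M)
  | .lit p, _ => p.sem
  | .var X, Ω => barVal Ω X
  | .or φ ψ, Ω => φ.sem Ω ∪ ψ.sem Ω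
  | .and φ ψ, Ω => φ.sem Ω ∩ ψ.sem Ω
  | .dia a φ, Ω => {ω | ∃ ν, tr a ω ν ∧ ν ∈ φ.sem Ω}
  | .box a φ, Ω => {ω | ∀ ν, tr a ω ν → ν ∈ φ.sem Ω}
  | .mu X φ, Ω => ⋂₀ {D | φ.sem (modif Ω X D) ⊆ D}
  | .nu X φ, Ω => ⋃₀ {D | D ⊆ φ.sem (modif Ω X D)}

end MuSem

/-! ## Syntax of first-order game logic -/

universe uL vL u𝒳 uA uV

mutual
/-- Formulas of first-order game logic `GL_𝒱`. -/
inductive GLF (L : Language) (𝒳 : Type u𝒳) (Act : Type uA) (V : Type uV) where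
  | lit (p : Lit L 𝒳)
  | var (X : V)
  | not (φ : GLF L 𝒳 Act V)
  | or (φ₁ φ₂ : GLF L 𝒳 Act V)
  | dia (γ : GLG L 𝒳 Act V) (φ : GLF L 𝒳 Act V)

/-- Games of first-order game logic `GL_𝒱`. -/
inductive GLG (L : Language) (𝒳 : Type u𝒳) (Act : Type uA) (V : Type uV) where
  | act (a : Act)
  | test (φ : GLF L 𝒳 Act V)
  | choice (γ₁ γ₂ : GLG L 𝒳 Act V)
  | seq (γ₁ γ₂ : GLG L 𝒳 Act V)
  | star (γ : GLG L 𝒳 Act V)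
  | dual (γ : GLG L 𝒳 Act V)
end

section GLDefs

variable {L : Language} {𝒳 Act V : Type*}

mutual
/-- Propositional variables occurring in a game-logic formula. -/
def GLF.pvars : GLF L 𝒳 Act V → Set V
  | .lit _ => ∅
  | .var X => {X}
  | .not φ => φ.pvars
  | .or φ ψ => φ.pvars ∪ ψ.pvars
  | .dia γ φ => γ.pvars ∪ φ.pvars

/-- Propositional variables occurring in a game. -/
def GLG.pvars : GLG L 𝒳 Act V → Set V
  | .act _ => ∅
  | .test φ => φ.pvars
  | .choice γ₁ γ₂ => γ₁.pvars ∪ γ₂.pvars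
  | .seq γ₁ γ₂ => γ₁.pvars ∪ γ₂.pvars
  | .star γ => γ.pvars
  | .dual γ => γ.pvars
end

mutual
/-- Transition symbols occurring in a game-logic formula. -/
def GLF.acts : GLF L 𝒳 Act V → Set Act
  | .lit _ => ∅
  | .var _ => ∅
  | .not φ => φ.acts
  | .or φ ψ => φ.acts ∪ ψ.acts
  | .dia γ φ => γ.acts ∪ φ.acts

/-- Transition symbols occurring in a game. -/
def GLG.acts : GLG L 𝒳 Act V → Set Act
  | .act a => {a}
  | .test φ => φ.acts
  | .choice γ₁ γ₂ => γ₁.acts ∪ γ₂.acts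
  | .seq γ₁ γ₂ => γ₁.acts ∪ γ₂.acts
  | .star γ => γ.acts
  | .dual γ => γ.acts
end

variable [DecidableEq V]

mutual
/-- Substitution of the game-logic formula `χ` for the propositional variable `X`
(everywhere, including inside tests of games). -/
def GLF.psub (X : V) (χ : GLF L 𝒳 Act V) : GLF L 𝒳 Act V → GLF L 𝒳 Act V
  | .lit p => .lit p
  | .var Y => if Y = X then χ else .var Y
  | .not φ => .not (GLF.psub X χ φ)
  | .or φ ψ => .or (GLF.psub X χ φ) (GLF.psub X χ ψ)
  | .dia γ φ => .dia (GLG.psub X χ γ) (GLF.psub X χ φ)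

def GLG.psub (X : V) (χ : GLF L 𝒳 Act V) : GLG L 𝒳 Act V → GLG L 𝒳 Act V
  | .act a => .act a
  | .test φ => .test (GLF.psub X χ φ)
  | .choice γ₁ γ₂ => .choice (GLG.psub X χ γ₁) (GLG.psub X χ γ₂)
  | .seq γ₁ γ₂ => .seq (GLG.psub X χ γ₁) (GLG.psub X χ γ₂)
  | .star γ => .star (GLG.psub X χ γ)
  | .dual γ => .dual (GLG.psub X χ γ)
end

/-- Implication in game logic. -/
def GLF.gimp (φ ψ : GLF L 𝒳 Act V) : GLF L 𝒳 Act V := .or (.not φ) ψ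

/-- Conjunction in game logic. -/
def GLF.gand (φ ψ : GLF L 𝒳 Act V) : GLF L 𝒳 Act V := .not (.or (.not φ) (.not ψ))

/-- Bi-implication in game logic. -/
def GLF.giff (φ ψ : GLF L 𝒳 Act V) : GLF L 𝒳 Act V := GLF.gand (GLF.gimp φ ψ) (GLF.gimp ψ φ)

end GLDefs

/-! ## Semantics of first-order game logic -/

section GLSem

variable {L : Language} {𝒳 Act V : Type*} {M : Type*} [L.Structure M]
variable (tr : Act → (𝒳 → M) → (𝒳 → M) → Prop)

mutual
/-- Denotational semantics of game-logic formulas. -/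
def GLF.sem : GLF L 𝒳 Act V → (V → Set (𝒳 → M)) → Set (𝒳 → M)
  | .lit p, _ => p.sem
  | .var X, Ω => Ω X
  | .not φ, Ω => (φ.sem Ω)ᶜ
  | .or φ ψ, Ω => φ.sem Ω ∪ ψ.sem Ω
  | .dia γ φ, Ω => γ.sem Ω (φ.sem Ω)

/-- Denotational semantics of games: `γ.sem tr Ω D` is the set of states from which
Angel has a winning strategy in `γ` to reach `D`. -/
def GLG.sem : GLG L 𝒳 Act V → (V → Set (𝒳 → M)) → Set (𝒳 → M) → Set (𝒳 → M)
  | .act a, _, D => {ω | ∃ ν, tr a ω ν ∧ ν ∈ D}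
  | .test φ, Ω, D => φ.sem Ω ∩ D
  | .choice γ₁ γ₂, Ω, D => γ₁.sem Ω D ∪ γ₂.sem Ω D
  | .seq γ₁ γ₂, Ω, D => γ₁.sem Ω (γ₂.sem Ω D)
  | .star γ, Ω, D => ⋂₀ {Z | D ∪ γ.sem Ω Z ⊆ Z}
  | .dual γ, Ω, D => (γ.sem Ω Dᶜ)ᶜ
end

end GLSem


/-! ## The translation ♯ from game logic into the μ-calculus -/

section Sharp

variable {L : Language} {𝒳 Act V : Type*}

/-- The translation `♯` of `GL_𝒱`-formulas into `Lμ_𝒱`-formulas, as a relation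
(the clause for `⟨γ*⟩φ` chooses a fresh propositional variable `X`). -/
inductive Sharp : GLF L 𝒳 Act V → MuF L 𝒳 Act V → Prop
  | lit (p) : Sharp (.lit p) (.lit p)
  | var (X) : Sharp (.var X) (.var (Sum.inl X))
  | not {φ m} : Sharp φ m → Sharp (.not φ) m.compl
  | or {φ₁ φ₂ m₁ m₂} : Sharp φ₁ m₁ → Sharp φ₂ m₂ → Sharp (.or φ₁ φ₂) (.or m₁ m₂)
  | act {a φ m} : Sharp φ m → Sharp (.dia (.act a) φ) (.dia a m)
  | test {φ₁ φ₂ m₁ m₂} : Sharp φ₁ m₁ → Sharp φ₂ m₂ → Sharp (.dia (.test φ₁) φ₂) (.and m₁ m₂)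
  | choice {γ₁ γ₂ φ m₁ m₂} : Sharp (.dia γ₁ φ) m₁ → Sharp (.dia γ₂ φ) m₂ →
      Sharp (.dia (.choice γ₁ γ₂) φ) (.or m₁ m₂)
  | seq {γ₁ γ₂ φ m} : Sharp (.dia γ₁ (.dia γ₂ φ)) m → Sharp (.dia (.seq γ₁ γ₂) φ) m
  | dual {γ φ m} : Sharp (.dia γ (.not φ)) m → Sharp (.dia (.dual γ) φ) m.compl
  | star {γ φ X m} : X ∉ φ.pvars → X ∉ γ.pvars →
      Sharp (.or φ (.dia γ (.var X))) m →
      Sharp (.dia (.star γ) φ) (.mu (Sum.inl X) m)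

end Sharp

/-! ## The translation of μ-calculus formulas into games (dictionaries) -/

section Flat

variable {L : Language} {𝒳 Act V : Type*} [DecidableEq V]

/-- A barred propositional variable as a game logic formula (`X̄` is `¬X`). -/
def gvar : V ⊕ V → GLF L 𝒳 Act V := Sum.elim .var (fun x => .not (.var x))

/-- A canonical true game-logic formula `⊤`. -/
def glTrue (ℓ : 𝒳) : GLF L 𝒳 Act V := .lit (.eq (.var ℓ) (.var ℓ))

/-- A canonical false game-logic formula `⊥`. -/
def glFalse (ℓ : 𝒳) : GLF L 𝒳 Act V := .lit (.ne (.var ℓ) (.var ℓ))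

/-- The dictionary `ϑ[X]`, treating `X` (and `X̄`) as bound. -/
def dictUp (ϑ : V → Bool) (X : V ⊕ V) : V → Bool := Function.update ϑ (unbar X) true

/-- A dictionary is compatible with a formula iff it takes value `0` on all
propositional variables bound in the formula. -/
def Compat (ϑ : V → Bool) (φ : MuF L 𝒳 Act V) : Prop :=
  ∀ X ∈ φ.boundVars, ϑ (unbar X) = false

/-- Demonic choice `γ₁ ∩ γ₂`. -/
def GLG.dchoice (γ₁ γ₂ : GLG L 𝒳 Act V) : GLG L 𝒳 Act V := .dual (.choice (.dual γ₁) (.dual γ₂))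

/-- Demonic repetition `γ^×`. -/
def GLG.cross (γ : GLG L 𝒳 Act V) : GLG L 𝒳 Act V := .dual (.star (.dual γ))

/-- The translation `φ^ϑ` of an `Lμ_𝒱`-formula into a `GL_𝒱`-game, relative to a
dictionary `ϑ`, a control variable `ℓ`, constant symbols `c_X`, and the deterministic
assignment transition symbols `asn`. -/
def trGame (ℓ : 𝒳) (c : V ⊕ V → L.Constants) (asn : 𝒳 → L.Term 𝒳 → Act) :
    MuF L 𝒳 Act V → (V → Bool) → GLG L 𝒳 Act V
  | .lit p, _ => .seq (.test (.lit p)) (.dual (.test (glFalse ℓ)))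
  | .var X, ϑ =>
      if ϑ (unbar X) then .act (asn ℓ (Language.Constants.term (c X)))
      else .seq (.test (gvar X)) (.dual (.test (glFalse ℓ)))
  | .or φ ψ, ϑ => .choice (trGame ℓ c asn φ ϑ) (trGame ℓ c asn ψ ϑ)
  | .and φ ψ, ϑ => GLG.dchoice (trGame ℓ c asn φ ϑ) (trGame ℓ c asn ψ ϑ)
  | .dia a φ, ϑ => .seq (.act a) (trGame ℓ c asn φ ϑ)
  | .box a φ, ϑ => .seq (.dual (.act a)) (trGame ℓ c asn φ ϑ)
  | .mu X φ, ϑ => .seq (.act (asn ℓ (Language.Constants.term (c X))))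
      (.seq (.star (.seq (.test (.lit (.eq (.var ℓ) (Language.Constants.term (c X)))))
                         (trGame ℓ c asn φ (dictUp ϑ X))))
            (.test (.lit (.ne (.var ℓ) (Language.Constants.term (c X))))))
  | .nu X φ, ϑ => .seq (.act (asn ℓ (Language.Constants.term (c X))))
      (.seq (GLG.cross (.seq (.dual (.test (.lit (.eq (.var ℓ) (Language.Constants.term (c X))))))
                             (trGame ℓ c asn φ (dictUp ϑ X))))
            (.dual (.test (.lit (.ne (.var ℓ) (Language.Constants.term (c X)))))))

/-- The translation `ψ♭ = ⟨ψ^η⟩⊤` of an `Lμ`-formula into a `GL`-formula,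
where `η` is the dictionary that is `0` everywhere. -/
def flatF (ℓ : 𝒳) (c : V ⊕ V → L.Constants) (asn : 𝒳 → L.Term 𝒳 → Act)
    (ψ : MuF L 𝒳 Act V) : GLF L 𝒳 Act V :=
  .dia (trGame ℓ c asn ψ (fun _ => false)) (glTrue ℓ)

/-- The object variables occurring (in literals) in a μ-calculus formula. -/
def MuF.ovars : MuF L 𝒳 Act V → Set 𝒳
  | .lit p => p.ovars
  | .var _ => ∅
  | .or φ ψ => φ.ovars ∪ ψ.ovars
  | .and φ ψ => φ.ovars ∪ ψ.ovars
  | .dia _ φ => φ.ovars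
  | .box _ φ => φ.ovars
  | .mu _ φ => φ.ovars
  | .nu _ φ => φ.ovars

variable {M : Type*} [DecidableEq 𝒳]

/-- Object variable `y` is independent of transition `a` under interpretation `tr`:
whenever `(ω,ν) ∈ ⟦a⟧` then also `(ω[b/y],ν[b/y]) ∈ ⟦a⟧`. -/
def IndepAct (tr : Act → (𝒳 → M) → (𝒳 → M) → Prop) (y : 𝒳) (a : Act) : Prop :=
  ∀ (b : M) ω ν, tr a ω ν → tr a (Function.update ω y b) (Function.update ν y b)

/-- A valuation is independent of the object variable `y`. -/
def IndepVal (y : 𝒳) (Ω : V → Set (𝒳 → M)) : Prop :=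
  ∀ (X : V) (b : M) (ω : 𝒳 → M), ω ∈ Ω X ↔ Function.update ω y b ∈ Ω X

end Flat

/-! ## Signatures with deterministic and nondeterministic assignments -/

/-- Transition symbols of a signature with deterministic and nondeterministic
assignments: base symbols from `A₀`, deterministic assignments `x := θ`, and
nondeterministic assignments `x := *`. -/
inductive CAct (L : Language) (𝒳 : Type u𝒳) (A₀ : Type uA) where
  | base (a : A₀)
  | asn (x : 𝒳) (θ : L.Term 𝒳)
  | rand (x : 𝒳)

section CActDefs

variable {L : Language} {𝒳 A₀ : Type*} [DecidableEq 𝒳]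

/-- Substitution of the term `θ` for the object variable `x` in a term. -/
def tsub (x : 𝒳) (θ : L.Term 𝒳) (t : L.Term 𝒳) : L.Term 𝒳 :=
  t.subst (fun y => if y = x then θ else .var y)

/-- Swapping the object variables `x` and `y` in a term. -/
def tswap (x y : 𝒳) (t : L.Term 𝒳) : L.Term 𝒳 := t.relabel (Equiv.swap x y)

/-- Substitution in literals. -/
def Lit.osub (x : 𝒳) (θ : L.Term 𝒳) : Lit L 𝒳 → Lit L 𝒳
  | .eq t₁ t₂ => .eq (tsub x θ t₁) (tsub x θ t₂)
  | .ne t₁ t₂ => .ne (tsub x θ t₁) (tsub x θ t₂)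
  | .rel R ts => .rel R (fun i => tsub x θ (ts i))
  | .nrel R ts => .nrel R (fun i => tsub x θ (ts i))

/-- Swapping object variables in literals. -/
def Lit.oswap (x y : 𝒳) : Lit L 𝒳 → Lit L 𝒳
  | .eq t₁ t₂ => .eq (tswap x y t₁) (tswap x y t₂)
  | .ne t₁ t₂ => .ne (tswap x y t₁) (tswap x y t₂)
  | .rel R ts => .rel R (fun i => tswap x y (ts i))
  | .nrel R ts => .nrel R (fun i => tswap x y (ts i))

namespace CAct

/-- Whether the transition binds (assigns) the object variable `x`. -/
def bindsB (x : 𝒳) : CAct L 𝒳 A₀ → Bool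
  | .base _ => false
  | .asn y _ => decide (y = x)
  | .rand y => decide (y = x)

/-- Substitution of `θ` for `x` in a transition symbol. -/
def osub (x : 𝒳) (θ : L.Term 𝒳) : CAct L 𝒳 A₀ → CAct L 𝒳 A₀
  | .base a => .base a
  | .asn y η => .asn y (tsub x θ η)
  | .rand y => .rand y

/-- Renaming `x ↔ y` in a transition symbol, using the signature's closure `sw`
of base transition symbols under renaming. -/
def oswap (sw : 𝒳 → 𝒳 → A₀ → A₀) (x y : 𝒳) : CAct L 𝒳 A₀ → CAct L 𝒳 A₀
  | .base a => .base (sw x y a)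
  | .asn z η => .asn (Equiv.swap x y z) (tswap x y η)
  | .rand z => .rand (Equiv.swap x y z)

/-- The object variables a transition symbol may depend on, given an interface
`fvB` for base transition symbols. -/
def ovarsF (fvB : A₀ → Set 𝒳) : CAct L 𝒳 A₀ → Set 𝒳
  | .base b => fvB b
  | .asn x θ => {x} ∪ tvars θ
  | .rand x => {x}

/-- The object variables bound (assigned) by a transition symbol. -/
def obinds : CAct L 𝒳 A₀ → Set 𝒳
  | .base _ => ∅
  | .asn x _ => {x}
  | .rand x => {x}

/-- The base transition symbols of a transition symbol. -/
def bases : CAct L 𝒳 A₀ → Set A₀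
  | .base a => {a}
  | .asn _ _ => ∅
  | .rand _ => ∅

end CAct

/-- Interpretation of transition symbols in an assignment and quantifier structure:
base symbols are interpreted by `trb`, deterministic assignments update the assigned
variable to the value of the term, nondeterministic assignments update it arbitrarily. -/
def ctrans {M : Type*} [L.Structure M] (trb : A₀ → (𝒳 → M) → (𝒳 → M) → Prop) :
    CAct L 𝒳 A₀ → (𝒳 → M) → (𝒳 → M) → Prop
  | .base b => trb b
  | .asn x θ => fun ω ν => ν = Function.update ω x (θ.realize ω)
  | .rand x => fun ω ν => ∃ e : M, ν = Function.update ω x e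

end CActDefs

/-! ## Syntactic operations on μ-calculus formulas over such signatures -/

section MuCalcOps

variable {L : Language} {𝒳 V A₀ : Type*} [DecidableEq 𝒳] [DecidableEq V]

namespace MuF

/-- Substitution `φ[θ/x]` of a term for an object variable. Base transition symbols
are unaffected; substitution stops under transitions binding `x`. -/
def osub (x : 𝒳) (θ : L.Term 𝒳) :
    MuF L 𝒳 (CAct L 𝒳 A₀) V → MuF L 𝒳 (CAct L 𝒳 A₀) V
  | .lit p => .lit (p.osub x θ)
  | .var X => .var X
  | .or φ ψ => .or (osub x θ φ) (osub x θ ψ)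
  | .and φ ψ => .and (osub x θ φ) (osub x θ ψ)
  | .dia a φ => .dia (a.osub x θ) (if a.bindsB x then φ else osub x θ φ)
  | .box a φ => .box (a.osub x θ) (if a.bindsB x then φ else osub x θ φ)
  | .mu X φ => .mu X (osub x θ φ)
  | .nu X φ => .nu X (osub x θ φ)

/-- Renaming `φₓʸ`, swapping the object variables `x` and `y` throughout. -/
def oswap (sw : 𝒳 → 𝒳 → A₀ → A₀) (x y : 𝒳) :
    MuF L 𝒳 (CAct L 𝒳 A₀) V → MuF L 𝒳 (CAct L 𝒳 A₀) V
  | .lit p => .lit (p.oswap x y)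
  | .var X => .var X
  | .or φ ψ => .or (oswap sw x y φ) (oswap sw x y ψ)
  | .and φ ψ => .and (oswap sw x y φ) (oswap sw x y ψ)
  | .dia a φ => .dia (a.oswap sw x y) (oswap sw x y φ)
  | .box a φ => .box (a.oswap sw x y) (oswap sw x y φ)
  | .mu X φ => .mu X (oswap sw x y φ)
  | .nu X φ => .nu X (oswap sw x y φ)

/-- The object variables a formula may depend on. -/
def ovarsF (fvB : A₀ → Set 𝒳) : MuF L 𝒳 (CAct L 𝒳 A₀) V → Set 𝒳
  | .lit p => p.ovars
  | .var _ => ∅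
  | .or φ ψ => ovarsF fvB φ ∪ ovarsF fvB ψ
  | .and φ ψ => ovarsF fvB φ ∪ ovarsF fvB ψ
  | .dia a φ => a.ovarsF fvB ∪ ovarsF fvB φ
  | .box a φ => a.ovarsF fvB ∪ ovarsF fvB φ
  | .mu _ φ => ovarsF fvB φ
  | .nu _ φ => ovarsF fvB φ

/-- The object variables bound by some transition occurring in the formula. -/
def obindsC : MuF L 𝒳 (CAct L 𝒳 A₀) V → Set 𝒳
  | .lit _ => ∅
  | .var _ => ∅
  | .or φ ψ => obindsC φ ∪ obindsC ψ
  | .and φ ψ => obindsC φ ∪ obindsC ψ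
  | .dia a φ => a.obinds ∪ obindsC φ
  | .box a φ => a.obinds ∪ obindsC φ
  | .mu _ φ => obindsC φ
  | .nu _ φ => obindsC φ

/-- The base transition symbols occurring in a formula. -/
def baseActs : MuF L 𝒳 (CAct L 𝒳 A₀) V → Set A₀
  | .lit _ => ∅
  | .var _ => ∅
  | .or φ ψ => baseActs φ ∪ baseActs ψ
  | .and φ ψ => baseActs φ ∪ baseActs ψ
  | .dia a φ => a.bases ∪ baseActs φ
  | .box a φ => a.bases ∪ baseActs φ
  | .mu _ φ => baseActs φ
  | .nu _ φ => baseActs φ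

end MuF

/-- Admissibility of the substitution `φ[θ/x]` for the axiom `∃I`. -/
def OAdm (fvB : A₀ → Set 𝒳) (x : 𝒳) (θ : L.Term 𝒳)
    (φ : MuF L 𝒳 (CAct L 𝒳 A₀) V) : Prop :=
  x ∉ φ.ovarsF fvB ∨
    (φ.baseActs = ∅ ∧ (∀ y ∈ tvars θ, y ∉ φ.obindsC) ∧ φ.freeVars = ∅)

end MuCalcOps

/-! ## Propositional tautologies and equality axioms for the μ-calculus -/

section MuAx

variable {L : Language} {𝒳 Act V : Type*} [DecidableEq V]

namespace MuF

/-- Purely propositional formulas: built from propositional variables by `∨` and `∧`. -/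
def PureProp : MuF L 𝒳 Act V → Prop
  | .var _ => True
  | .or φ ψ => PureProp φ ∧ PureProp ψ
  | .and φ ψ => PureProp φ ∧ PureProp ψ
  | _ => False

/-- Evaluation of a purely propositional formula under a Boolean assignment,
interpreting bars as negation. -/
def propEval (v : V → Prop) : MuF L 𝒳 Act V → Prop
  | .var (.inl X) => v X
  | .var (.inr X) => ¬ v X
  | .or φ ψ => propEval v φ ∨ propEval v ψ
  | .and φ ψ => propEval v φ ∧ propEval v ψ
  | _ => False

end MuF

/-- Propositional tautologies: the smallest set of formulas closed under substitution
of propositional variables that contains all valid purely propositional formulas. -/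
inductive MuTaut : MuF L 𝒳 Act V → Prop
  | base {φ : MuF L 𝒳 Act V} : φ.PureProp → (∀ v : V → Prop, φ.propEval v) → MuTaut φ
  | subst {φ : MuF L 𝒳 Act V} (X : V ⊕ V) (ψ : MuF L 𝒳 Act V) :
      MuTaut φ → MuTaut (MuF.subst X ψ φ)

/-- Iterated implication `φ₁ → (φ₂ → ⋯ → χ)`. -/
def impChain : List (MuF L 𝒳 Act V) → MuF L 𝒳 Act V → MuF L 𝒳 Act V
  | [], χ => χ
  | φ :: t, χ => φ.imp (impChain t χ)

/-- The first-order equality axioms: equality is a congruence with respect to the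
function and predicate symbols of the first-order signature. -/
inductive MuEqAx : MuF L 𝒳 Act V → Prop
  | refl (t : L.Term 𝒳) : MuEqAx (.lit (.eq t t))
  | symm (t₁ t₂ : L.Term 𝒳) : MuEqAx ((MuF.lit (.eq t₁ t₂)).imp (.lit (.eq t₂ t₁)))
  | trans (t₁ t₂ t₃ : L.Term 𝒳) :
      MuEqAx ((MuF.lit (.eq t₁ t₂)).imp ((MuF.lit (.eq t₂ t₃)).imp (.lit (.eq t₁ t₃))))
  | congFun {n : ℕ} (f : L.Functions n) (ts ts' : Fin n → L.Term 𝒳) :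
      MuEqAx (impChain ((List.finRange n).map fun i => MuF.lit (.eq (ts i) (ts' i)))
        (.lit (.eq (Language.Term.func f ts) (Language.Term.func f ts'))))
  | congRel {n : ℕ} (R : L.Relations n) (ts ts' : Fin n → L.Term 𝒳) :
      MuEqAx (impChain ((List.finRange n).map fun i => MuF.lit (.eq (ts i) (ts' i)))
        ((MuF.lit (.rel R ts)).imp (.lit (.rel R ts'))))

/-- Renaming of bound propositional variables (α-equivalence). -/
inductive AEq : MuF L 𝒳 Act V → MuF L 𝒳 Act V → Prop
  | refl (φ) : AEq φ φ
  | symm {φ ψ} : AEq φ ψ → AEq ψ φ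
  | trans {φ ψ χ} : AEq φ ψ → AEq ψ χ → AEq φ χ
  | or {φ₁ φ₂ ψ₁ ψ₂} : AEq φ₁ ψ₁ → AEq φ₂ ψ₂ → AEq (.or φ₁ φ₂) (.or ψ₁ ψ₂)
  | and {φ₁ φ₂ ψ₁ ψ₂} : AEq φ₁ ψ₁ → AEq φ₂ ψ₂ → AEq (.and φ₁ φ₂) (.and ψ₁ ψ₂)
  | dia (a) {φ ψ} : AEq φ ψ → AEq (.dia a φ) (.dia a ψ)
  | box (a) {φ ψ} : AEq φ ψ → AEq (.box a φ) (.box a ψ)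
  | mu (X) {φ ψ} : AEq φ ψ → AEq (.mu X φ) (.mu X ψ)
  | nu (X) {φ ψ} : AEq φ ψ → AEq (.nu X φ) (.nu X ψ)
  | muRename {X Y : V ⊕ V} {φ : MuF L 𝒳 Act V} : Y ∉ φ.mentions → bar Y ∉ φ.mentions →
      AEq (.mu X φ) (.mu Y (MuF.subst X (.var Y) φ))
  | nuRename {X Y : V ⊕ V} {φ : MuF L 𝒳 Act V} : Y ∉ φ.mentions → bar Y ∉ φ.mentions →
      AEq (.nu X φ) (.nu Y (MuF.subst X (.var Y) φ))

end MuAx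

/-! ## The Hilbert-style proof calculus for the first-order modal μ-calculus -/

section MuCalc

variable {L : Language} {𝒳 V A₀ : Type*} [DecidableEq 𝒳] [DecidableEq V]

/-- Provability in the `Lμ`-calculus from the theory `T`, by a derivation all of whose
formulas belong to `S`. The calculus has rules `MP`, `Mₐ` and `FPμ`, the axioms
`μ` (unfolding), `∃I`, `V`, `⟨:=⟩`, all propositional tautologies and equality axioms,
and permits renaming of bound propositional variables. -/
inductive MuPrvIn (sw : 𝒳 → 𝒳 → A₀ → A₀) (fvB : A₀ → Set 𝒳)
    (S : Set (MuF L 𝒳 (CAct L 𝒳 A₀) V)) (T : Set (MuF L 𝒳 (CAct L 𝒳 A₀) V)) :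
    MuF L 𝒳 (CAct L 𝒳 A₀) V → Prop
  | hyp {φ} : φ ∈ T → φ ∈ S → MuPrvIn sw fvB S T φ
  | taut {φ} : MuTaut φ → φ.WF → φ ∈ S → MuPrvIn sw fvB S T φ
  | eqax {φ} : MuEqAx φ → φ ∈ S → MuPrvIn sw fvB S T φ
  | mufix {X φ} : (MuF.mu X φ).WF → MuF.FreeFor X (.mu X φ) φ →
      (MuF.subst X (.mu X φ) φ).iff (.mu X φ) ∈ S →
      MuPrvIn sw fvB S T ((MuF.subst X (.mu X φ) φ).iff (.mu X φ))
  | existsI {x θ φ} : φ.WF → OAdm fvB x θ φ →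
      (φ.osub x θ).imp (.dia (.rand x) φ) ∈ S →
      MuPrvIn sw fvB S T ((φ.osub x θ).imp (.dia (.rand x) φ))
  | vac {x ψ} : ψ.WF → x ∉ ψ.ovarsF fvB → ψ.freeVars = ∅ →
      (MuF.dia (.rand x) ψ).imp ψ ∈ S →
      MuPrvIn sw fvB S T ((MuF.dia (.rand x) ψ).imp ψ)
  | asgn {x y : 𝒳} {θ : L.Term 𝒳} {φ} : φ.WF → y ≠ x → y ∉ tvars θ →
      y ∉ φ.ovarsF fvB → φ.freeVars = ∅ →
      (MuF.dia (.asn x θ) φ).iff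
        (.dia (.rand y) (.and (.lit (.eq (.var y) θ)) (φ.oswap sw x y))) ∈ S →
      MuPrvIn sw fvB S T ((MuF.dia (.asn x θ) φ).iff
        (.dia (.rand y) (.and (.lit (.eq (.var y) θ)) (φ.oswap sw x y))))
  | mp {φ ψ} : MuPrvIn sw fvB S T (ψ.imp φ) → MuPrvIn sw fvB S T ψ → φ ∈ S →
      MuPrvIn sw fvB S T φ
  | mono (a : CAct L 𝒳 A₀) {ψ φ} : MuPrvIn sw fvB S T (ψ.imp φ) →
      (MuF.dia a ψ).imp (.dia a φ) ∈ S →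
      MuPrvIn sw fvB S T ((MuF.dia a ψ).imp (.dia a φ))
  | fpmu {X ψ φ} : MuF.FreeFor X φ ψ → (MuF.mu X ψ).WF →
      MuPrvIn sw fvB S T ((MuF.subst X φ ψ).imp φ) → (MuF.mu X ψ).imp φ ∈ S →
      MuPrvIn sw fvB S T ((MuF.mu X ψ).imp φ)
  | alpha {φ ψ} : AEq φ ψ → MuPrvIn sw fvB S T φ → ψ ∈ S → MuPrvIn sw fvB S T ψ

/-- Provability `T ⊢_Lμ φ` in the `Lμ`-calculus. -/
abbrev MuPrv (sw : 𝒳 → 𝒳 → A₀ → A₀) (fvB : A₀ → Set 𝒳)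
    (T : Set (MuF L 𝒳 (CAct L 𝒳 A₀) V)) : MuF L 𝒳 (CAct L 𝒳 A₀) V → Prop :=
  MuPrvIn sw fvB Set.univ T

end MuCalc

/-! ## Syntactic operations on game logic formulas over assignment signatures -/

section GLCalcOps

variable {L : Language} {𝒳 V A₀ : Type*} [DecidableEq 𝒳] [DecidableEq V]

mutual
/-- Substitution `φ[θ/x]` of a term for an object variable in game logic formulas. -/
def GLF.osub (x : 𝒳) (θ : L.Term 𝒳) :
    GLF L 𝒳 (CAct L 𝒳 A₀) V → GLF L 𝒳 (CAct L 𝒳 A₀) V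
  | .lit p => .lit (p.osub x θ)
  | .var X => .var X
  | .not φ => .not (GLF.osub x θ φ)
  | .or φ ψ => .or (GLF.osub x θ φ) (GLF.osub x θ ψ)
  | .dia γ φ => .dia (GLG.osub x θ γ) (GLF.osub x θ φ)

/-- Substitution of a term for an object variable in games. -/
def GLG.osub (x : 𝒳) (θ : L.Term 𝒳) :
    GLG L 𝒳 (CAct L 𝒳 A₀) V → GLG L 𝒳 (CAct L 𝒳 A₀) V
  | .act a => .act (a.osub x θ)
  | .test φ => .test (GLF.osub x θ φ)
  | .choice γ₁ γ₂ => .choice (GLG.osub x θ γ₁) (GLG.osub x θ γ₂)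
  | .seq γ₁ γ₂ => .seq (GLG.osub x θ γ₁) (GLG.osub x θ γ₂)
  | .star γ => .star (GLG.osub x θ γ)
  | .dual γ => .dual (GLG.osub x θ γ)
end

mutual
/-- Renaming `φₓʸ`, swapping the object variables `x` and `y` throughout. -/
def GLF.oswap (sw : 𝒳 → 𝒳 → A₀ → A₀) (x y : 𝒳) :
    GLF L 𝒳 (CAct L 𝒳 A₀) V → GLF L 𝒳 (CAct L 𝒳 A₀) V
  | .lit p => .lit (p.oswap x y)
  | .var X => .var X
  | .not φ => .not (GLF.oswap sw x y φ)
  | .or φ ψ => .or (GLF.oswap sw x y φ) (GLF.oswap sw x y ψ)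
  | .dia γ φ => .dia (GLG.oswap sw x y γ) (GLF.oswap sw x y φ)

def GLG.oswap (sw : 𝒳 → 𝒳 → A₀ → A₀) (x y : 𝒳) :
    GLG L 𝒳 (CAct L 𝒳 A₀) V → GLG L 𝒳 (CAct L 𝒳 A₀) V
  | .act a => .act (a.oswap sw x y)
  | .test φ => .test (GLF.oswap sw x y φ)
  | .choice γ₁ γ₂ => .choice (GLG.oswap sw x y γ₁) (GLG.oswap sw x y γ₂)
  | .seq γ₁ γ₂ => .seq (GLG.oswap sw x y γ₁) (GLG.oswap sw x y γ₂)
  | .star γ => .star (GLG.oswap sw x y γ)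
  | .dual γ => .dual (GLG.oswap sw x y γ)
end

mutual
/-- Object variables a game logic formula may depend on. -/
def GLF.ovarsF (fvB : A₀ → Set 𝒳) : GLF L 𝒳 (CAct L 𝒳 A₀) V → Set 𝒳
  | .lit p => p.ovars
  | .var _ => ∅
  | .not φ => GLF.ovarsF fvB φ
  | .or φ ψ => GLF.ovarsF fvB φ ∪ GLF.ovarsF fvB ψ
  | .dia γ φ => GLG.ovarsF fvB γ ∪ GLF.ovarsF fvB φ

def GLG.ovarsF (fvB : A₀ → Set 𝒳) : GLG L 𝒳 (CAct L 𝒳 A₀) V → Set 𝒳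
  | .act a => a.ovarsF fvB
  | .test φ => GLF.ovarsF fvB φ
  | .choice γ₁ γ₂ => GLG.ovarsF fvB γ₁ ∪ GLG.ovarsF fvB γ₂
  | .seq γ₁ γ₂ => GLG.ovarsF fvB γ₁ ∪ GLG.ovarsF fvB γ₂
  | .star γ => GLG.ovarsF fvB γ
  | .dual γ => GLG.ovarsF fvB γ
end

mutual
/-- Object variables bound by a transition occurring in a formula. -/
def GLF.obindsC : GLF L 𝒳 (CAct L 𝒳 A₀) V → Set 𝒳
  | .lit _ => ∅
  | .var _ => ∅
  | .not φ => GLF.obindsC φ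
  | .or φ ψ => GLF.obindsC φ ∪ GLF.obindsC ψ
  | .dia γ φ => GLG.obindsC γ ∪ GLF.obindsC φ

def GLG.obindsC : GLG L 𝒳 (CAct L 𝒳 A₀) V → Set 𝒳
  | .act a => a.obinds
  | .test φ => GLF.obindsC φ
  | .choice γ₁ γ₂ => GLG.obindsC γ₁ ∪ GLG.obindsC γ₂
  | .seq γ₁ γ₂ => GLG.obindsC γ₁ ∪ GLG.obindsC γ₂
  | .star γ => GLG.obindsC γ
  | .dual γ => GLG.obindsC γ
end

mutual
/-- The base transition symbols occurring in a formula. -/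
def GLF.baseActs : GLF L 𝒳 (CAct L 𝒳 A₀) V → Set A₀
  | .lit _ => ∅
  | .var _ => ∅
  | .not φ => GLF.baseActs φ
  | .or φ ψ => GLF.baseActs φ ∪ GLF.baseActs ψ
  | .dia γ φ => GLG.baseActs γ ∪ GLF.baseActs φ

def GLG.baseActs : GLG L 𝒳 (CAct L 𝒳 A₀) V → Set A₀
  | .act a => a.bases
  | .test φ => GLF.baseActs φ
  | .choice γ₁ γ₂ => GLG.baseActs γ₁ ∪ GLG.baseActs γ₂
  | .seq γ₁ γ₂ => GLG.baseActs γ₁ ∪ GLG.baseActs γ₂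
  | .star γ => GLG.baseActs γ
  | .dual γ => GLG.baseActs γ
end

/-- Admissibility of the substitution `φ[θ/x]` in game logic. -/
def GOAdm (fvB : A₀ → Set 𝒳) (x : 𝒳) (θ : L.Term 𝒳)
    (φ : GLF L 𝒳 (CAct L 𝒳 A₀) V) : Prop :=
  x ∉ φ.ovarsF fvB ∨ (φ.baseActs = ∅ ∧ ∀ y ∈ tvars θ, y ∉ φ.obindsC)

end GLCalcOps

/-! ## Propositional tautologies and equality axioms for game logic -/

section GLAx

variable {L : Language} {𝒳 Act V : Type*} [DecidableEq V]

/-- Purely propositional game logic formulas. -/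
def GLF.pPure : GLF L 𝒳 Act V → Prop
  | .var _ => True
  | .not φ => GLF.pPure φ
  | .or φ ψ => GLF.pPure φ ∧ GLF.pPure ψ
  | _ => False

/-- Evaluation of propositional game logic formulas. -/
def GLF.pEval (v : V → Prop) : GLF L 𝒳 Act V → Prop
  | .var X => v X
  | .not φ => ¬ GLF.pEval v φ
  | .or φ ψ => GLF.pEval v φ ∨ GLF.pEval v ψ
  | _ => False

/-- Propositional tautologies of game logic: closure of the valid purely propositional
formulas under substitution of propositional variables. -/
inductive GLTaut : GLF L 𝒳 Act V → Prop
  | base {φ : GLF L 𝒳 Act V} : φ.pPure → (∀ v : V → Prop, φ.pEval v) → GLTaut φ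
  | subst {φ : GLF L 𝒳 Act V} (X : V) (ψ : GLF L 𝒳 Act V) : GLTaut φ → GLTaut (GLF.psub X ψ φ)

/-- Iterated implication in game logic. -/
def gimpChain : List (GLF L 𝒳 Act V) → GLF L 𝒳 Act V → GLF L 𝒳 Act V
  | [], χ => χ
  | φ :: t, χ => φ.gimp (gimpChain t χ)

/-- The first-order equality axioms for game logic. -/
inductive GLEqAx : GLF L 𝒳 Act V → Prop
  | refl (t : L.Term 𝒳) : GLEqAx (.lit (.eq t t))
  | symm (t₁ t₂ : L.Term 𝒳) : GLEqAx ((GLF.lit (.eq t₁ t₂)).gimp (.lit (.eq t₂ t₁)))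
  | trans (t₁ t₂ t₃ : L.Term 𝒳) :
      GLEqAx ((GLF.lit (.eq t₁ t₂)).gimp ((GLF.lit (.eq t₂ t₃)).gimp (.lit (.eq t₁ t₃))))
  | congFun {n : ℕ} (f : L.Functions n) (ts ts' : Fin n → L.Term 𝒳) :
      GLEqAx (gimpChain ((List.finRange n).map fun i => GLF.lit (.eq (ts i) (ts' i)))
        (.lit (.eq (Language.Term.func f ts) (Language.Term.func f ts'))))
  | congRel {n : ℕ} (R : L.Relations n) (ts ts' : Fin n → L.Term 𝒳) :
      GLEqAx (gimpChain ((List.finRange n).map fun i => GLF.lit (.eq (ts i) (ts' i)))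
        ((GLF.lit (.rel R ts)).gimp (.lit (.rel R ts'))))

end GLAx

/-! ## The Hilbert-style proof calculus for first-order game logic -/

section GLCalc

variable {L : Language} {𝒳 V A₀ : Type*} [DecidableEq 𝒳] [DecidableEq V]

/-- Provability `T ⊢_GL φ` in the `GL`-calculus (operating on `GL`-formulas, i.e.
formulas without propositional variables), with rules `MP`, `M`, `FP*`, the game
axioms `⟨?⟩`, `⟨∪⟩`, `⟨;⟩`, `⟨*⟩`, `⟨ᵈ⟩`, the axioms `∃I`, `V`, `⟨:=⟩`, and all
propositional tautologies and equality axioms. -/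
inductive GLPrv (sw : 𝒳 → 𝒳 → A₀ → A₀) (fvB : A₀ → Set 𝒳)
    (T : Set (GLF L 𝒳 (CAct L 𝒳 A₀) V)) : GLF L 𝒳 (CAct L 𝒳 A₀) V → Prop
  | hyp {φ} : φ ∈ T → GLPrv sw fvB T φ
  | taut {φ} : GLTaut φ → φ.pvars = ∅ → GLPrv sw fvB T φ
  | eqax {φ} : GLEqAx φ → GLPrv sw fvB T φ
  | existsI {x θ φ} : φ.pvars = ∅ → GOAdm fvB x θ φ →
      GLPrv sw fvB T ((φ.osub x θ).gimp (.dia (.act (.rand x)) φ))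
  | vac {x ψ} : ψ.pvars = ∅ → x ∉ ψ.ovarsF fvB →
      GLPrv sw fvB T ((GLF.dia (.act (.rand x)) ψ).gimp ψ)
  | asgn {x y : 𝒳} {θ : L.Term 𝒳} {φ} : φ.pvars = ∅ → y ≠ x → y ∉ tvars θ →
      y ∉ φ.ovarsF fvB →
      GLPrv sw fvB T ((GLF.dia (.act (.asn x θ)) φ).giff
        (.dia (.act (.rand y)) ((GLF.lit (.eq (.var y) θ)).gand (φ.oswap sw x y))))
  | testAx {ψ φ} : ψ.pvars = ∅ → φ.pvars = ∅ →
      GLPrv sw fvB T ((GLF.dia (.test ψ) φ).giff (ψ.gand φ))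
  | choiceAx {γ₁ γ₂ φ} : γ₁.pvars = ∅ → γ₂.pvars = ∅ → φ.pvars = ∅ →
      GLPrv sw fvB T ((GLF.dia (.choice γ₁ γ₂) φ).giff (.or (.dia γ₁ φ) (.dia γ₂ φ)))
  | seqAx {γ₁ γ₂ φ} : γ₁.pvars = ∅ → γ₂.pvars = ∅ → φ.pvars = ∅ →
      GLPrv sw fvB T ((GLF.dia (.seq γ₁ γ₂) φ).giff (.dia γ₁ (.dia γ₂ φ)))
  | starAx {γ φ} : γ.pvars = ∅ → φ.pvars = ∅ →
      GLPrv sw fvB T ((GLF.dia (.star γ) φ).giff (.or φ (.dia γ (.dia (.star γ) φ))))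
  | dualAx {γ φ} : γ.pvars = ∅ → φ.pvars = ∅ →
      GLPrv sw fvB T ((GLF.dia (.dual γ) φ).giff (.not (.dia γ (.not φ))))
  | mp {φ ψ} : GLPrv sw fvB T (ψ.gimp φ) → GLPrv sw fvB T ψ → GLPrv sw fvB T φ
  | mono (γ : GLG L 𝒳 (CAct L 𝒳 A₀) V) {ψ φ} : γ.pvars = ∅ →
      GLPrv sw fvB T (ψ.gimp φ) →
      GLPrv sw fvB T ((GLF.dia γ ψ).gimp (.dia γ φ))
  | fp {γ ψ φ} : γ.pvars = ∅ →
      GLPrv sw fvB T ((GLF.or ψ (.dia γ φ)).gimp φ) →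
      GLPrv sw fvB T ((GLF.dia (.star γ) ψ).gimp φ)

end GLCalc



/-! ## Auxiliary development: closing derivations -/

section MuClosing

variable {L : Language} {𝒳 Act V : Type*} [DecidableEq V]

@[simp] theorem bar_bar (X : V ⊕ V) : bar (bar X) = X := by cases X <;> rfl

@[simp] theorem unbar_bar (X : V ⊕ V) : unbar (bar X) = unbar X := by cases X <;> rfl

theorem bar_ne_self (X : V ⊕ V) : bar X ≠ X := by cases X <;> simp [bar]

theorem unbar_eq_unbar {W Y : V ⊕ V} : unbar W = unbar Y ↔ W = Y ∨ W = bar Y := by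
  cases W <;> cases Y <;> simp [unbar, bar]

theorem unbar_ne_unbar {W Y : V ⊕ V} (h1 : W ≠ Y) (h2 : W ≠ bar Y) :
    unbar W ≠ unbar Y := fun hu => by
  rcases unbar_eq_unbar.mp hu with h | h
  exacts [h1 h, h2 h]

/-- The closed formula substituted for a free propositional variable. -/
def cF : V ⊕ V → MuF L 𝒳 Act V
  | .inl x => .mu (.inl x) (.var (.inl x))
  | .inr x => .nu (.inr x) (.var (.inr x))

/-- The closing map: replaces every free propositional variable occurrence not
covered by the environment `e` by a closed formula. -/
def clF (e : V → Bool) : MuF L 𝒳 Act V → MuF L 𝒳 Act V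
  | .lit p => .lit p
  | .var X => if e (unbar X) then .var X else cF X
  | .or φ ψ => .or (clF e φ) (clF e ψ)
  | .and φ ψ => .and (clF e φ) (clF e ψ)
  | .dia a φ => .dia a (clF e φ)
  | .box a φ => .box a (clF e φ)
  | .mu X φ => .mu X (clF (Function.update e (unbar X) true) φ)
  | .nu X φ => .nu X (clF (Function.update e (unbar X) true) φ)

@[simp] theorem compl_cF (X : V ⊕ V) : (cF X : MuF L 𝒳 Act V).compl = cF (bar X) := by
  cases X <;> rfl

@[simp] theorem freeVars_cF (X : V ⊕ V) : (cF X : MuF L 𝒳 Act V).freeVars = ∅ := by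
  cases X <;> · ext Y; simp [cF, MuF.freeVars, bar]; tauto

@[simp] theorem mentions_cF (X : V ⊕ V) : (cF X : MuF L 𝒳 Act V).mentions = {X} := by
  cases X <;> simp [cF, MuF.mentions]

theorem wf_cF (X : V ⊕ V) : (cF X : MuF L 𝒳 Act V).WF := by
  cases X <;> simp [cF, MuF.WF, MuF.mentions, bar]

theorem subst_cF (Z : V ⊕ V) (ψ : MuF L 𝒳 Act V) (X : V ⊕ V) :
    MuF.subst Z ψ (cF X) = cF X := by
  cases X with
  | inl x =>
    show MuF.subst Z ψ (.mu (.inl x) (.var (.inl x))) = _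
    rw [MuF.subst]
    split_ifs with h
    · rfl
    · push_neg at h
      rw [MuF.subst, if_neg (fun hx => h.1 hx.symm),
        if_neg (fun hx => h.2 (by rw [hx, bar_bar]))]
      rfl
  | inr x =>
    show MuF.subst Z ψ (.nu (.inr x) (.var (.inr x))) = _
    rw [MuF.subst]
    split_ifs with h
    · rfl
    · push_neg at h
      rw [MuF.subst, if_neg (fun hx => h.1 hx.symm),
        if_neg (fun hx => h.2 (by rw [hx, bar_bar]))]
      rfl

@[simp] theorem clF_cF (e : V → Bool) (X : V ⊕ V) :
    clF e (cF X : MuF L 𝒳 Act V) = cF X := by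
  cases X <;> simp [cF, clF, unbar]

theorem clF_var_pos {e : V → Bool} {X : V ⊕ V} (h : e (unbar X) = true) :
    clF e (MuF.var X : MuF L 𝒳 Act V) = MuF.var X := by
  rw [clF, if_pos h]

theorem clF_var_neg {e : V → Bool} {X : V ⊕ V} (h : e (unbar X) = false) :
    clF e (MuF.var X : MuF L 𝒳 Act V) = cF X := by
  rw [clF, if_neg (by rw [h]; simp)]

theorem freeVars_subset_mentions (φ : MuF L 𝒳 Act V) : φ.freeVars ⊆ φ.mentions := by
  induction φ with
  | lit p => simp [MuF.freeVars, MuF.mentions]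
  | var X => simp [MuF.freeVars, MuF.mentions]
  | or φ ψ ih₁ ih₂ => exact Set.union_subset_union ih₁ ih₂
  | and φ ψ ih₁ ih₂ => exact Set.union_subset_union ih₁ ih₂
  | dia a φ ih => exact ih
  | box a φ ih => exact ih
  | mu X φ ih =>
    exact (Set.diff_subset).trans (ih.trans Set.subset_union_right)
  | nu X φ ih =>
    exact (Set.diff_subset).trans (ih.trans Set.subset_union_right)

theorem freeVars_clF {e : V → Bool} {φ : MuF L 𝒳 Act V} :
    ∀ Y ∈ (clF e φ).freeVars, Y ∈ φ.freeVars ∧ e (unbar Y) = true := by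
  induction φ generalizing e with
  | lit p => simp [clF, MuF.freeVars]
  | var X =>
    by_cases h : e (unbar X) <;> simp [clF, h, MuF.freeVars]
  | or φ ψ ih₁ ih₂ =>
    intro Y hY
    rcases hY with hY | hY
    · exact ⟨Or.inl (ih₁ Y hY).1, (ih₁ Y hY).2⟩
    · exact ⟨Or.inr (ih₂ Y hY).1, (ih₂ Y hY).2⟩
  | and φ ψ ih₁ ih₂ =>
    intro Y hY
    rcases hY with hY | hY
    · exact ⟨Or.inl (ih₁ Y hY).1, (ih₁ Y hY).2⟩
    · exact ⟨Or.inr (ih₂ Y hY).1, (ih₂ Y hY).2⟩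
  | dia a φ ih => exact ih
  | box a φ ih => exact ih
  | mu X φ ih =>
    rintro Y ⟨hY, hYn⟩
    obtain ⟨h1, h2⟩ := ih Y hY
    simp only [Set.mem_insert_iff, Set.mem_singleton_iff, not_or] at hYn
    have hne : unbar Y ≠ unbar X := unbar_ne_unbar hYn.1 hYn.2
    rw [Function.update_of_ne hne] at h2
    refine ⟨⟨h1, ?_⟩, h2⟩
    simp only [Set.mem_insert_iff, Set.mem_singleton_iff, not_or]
    exact hYn
  | nu X φ ih =>
    rintro Y ⟨hY, hYn⟩
    obtain ⟨h1, h2⟩ := ih Y hY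
    simp only [Set.mem_insert_iff, Set.mem_singleton_iff, not_or] at hYn
    have hne : unbar Y ≠ unbar X := unbar_ne_unbar hYn.1 hYn.2
    rw [Function.update_of_ne hne] at h2
    refine ⟨⟨h1, ?_⟩, h2⟩
    simp only [Set.mem_insert_iff, Set.mem_singleton_iff, not_or]
    exact hYn

theorem freeVars_clF_subset (e : V → Bool) (φ : MuF L 𝒳 Act V) :
    (clF e φ).freeVars ⊆ φ.freeVars :=
  fun Y hY => (freeVars_clF Y hY).1

theorem clF_closed (φ : MuF L 𝒳 Act V) :
    (clF (fun _ => false) φ).freeVars = ∅ := by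
  ext Y
  simp only [Set.mem_empty_iff_false, iff_false]
  intro hY
  exact absurd (freeVars_clF Y hY).2 (by simp)

theorem mentions_clF (e : V → Bool) (φ : MuF L 𝒳 Act V) :
    (clF e φ).mentions ⊆ φ.mentions := by
  induction φ generalizing e with
  | lit p => simp [clF, MuF.mentions]
  | var X =>
    by_cases h : e (unbar X) <;> simp [clF, h, MuF.mentions]
  | or φ ψ ih₁ ih₂ => exact Set.union_subset_union (ih₁ e) (ih₂ e)
  | and φ ψ ih₁ ih₂ => exact Set.union_subset_union (ih₁ e) (ih₂ e)
  | dia a φ ih => exact ih e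
  | box a φ ih => exact ih e
  | mu X φ ih => exact Set.union_subset_union (le_refl _) (ih _)
  | nu X φ ih => exact Set.union_subset_union (le_refl _) (ih _)

theorem wf_clF (e : V → Bool) {φ : MuF L 𝒳 Act V} (h : φ.WF) : (clF e φ).WF := by
  induction φ generalizing e with
  | lit p => trivial
  | var X =>
    by_cases he : e (unbar X)
    · simp [clF, he]; trivial
    · simp [clF, he]; exact wf_cF X
  | or φ ψ ih₁ ih₂ => exact ⟨ih₁ e h.1, ih₂ e h.2⟩
  | and φ ψ ih₁ ih₂ => exact ⟨ih₁ e h.1, ih₂ e h.2⟩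
  | dia a φ ih => exact ih e h
  | box a φ ih => exact ih e h
  | mu X φ ih => exact ⟨fun hm => h.1 (mentions_clF _ _ hm), ih _ h.2⟩
  | nu X φ ih => exact ⟨fun hm => h.1 (mentions_clF _ _ hm), ih _ h.2⟩

theorem clF_congr {e₁ e₂ : V → Bool} {φ : MuF L 𝒳 Act V}
    (h : ∀ X ∈ φ.freeVars, e₁ (unbar X) = e₂ (unbar X)) : clF e₁ φ = clF e₂ φ := by
  induction φ generalizing e₁ e₂ with
  | lit p => rfl
  | var X => simp only [clF, h X (by simp [MuF.freeVars])]
  | or φ ψ ih₁ ih₂ =>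
    simp only [clF]
    rw [ih₁ (fun X hX => h X (Or.inl hX)), ih₂ (fun X hX => h X (Or.inr hX))]
  | and φ ψ ih₁ ih₂ =>
    simp only [clF]
    rw [ih₁ (fun X hX => h X (Or.inl hX)), ih₂ (fun X hX => h X (Or.inr hX))]
  | dia a φ ih => simp only [clF]; rw [ih h]
  | box a φ ih => simp only [clF]; rw [ih h]
  | mu X φ ih =>
    simp only [clF]
    rw [ih ?_]
    intro Y hY
    by_cases hu : unbar Y = unbar X
    · rw [hu, Function.update_self, Function.update_self]
    · rw [Function.update_of_ne hu, Function.update_of_ne hu]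
      refine h Y ⟨hY, ?_⟩
      simp only [Set.mem_insert_iff, Set.mem_singleton_iff, not_or]
      constructor
      · rintro rfl; exact hu rfl
      · rintro rfl; exact hu (unbar_bar X)
  | nu X φ ih =>
    simp only [clF]
    rw [ih ?_]
    intro Y hY
    by_cases hu : unbar Y = unbar X
    · rw [hu, Function.update_self, Function.update_self]
    · rw [Function.update_of_ne hu, Function.update_of_ne hu]
      refine h Y ⟨hY, ?_⟩
      simp only [Set.mem_insert_iff, Set.mem_singleton_iff, not_or]
      constructor
      · rintro rfl; exact hu rfl
      · rintro rfl; exact hu (unbar_bar X)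

theorem clF_compl (e : V → Bool) (φ : MuF L 𝒳 Act V) :
    clF e φ.compl = (clF e φ).compl := by
  induction φ generalizing e with
  | lit p => rfl
  | var X =>
    by_cases h : e (unbar X) <;>
      simp [clF, MuF.compl, h]
  | or φ ψ ih₁ ih₂ => simp only [MuF.compl, clF, ih₁, ih₂]
  | and φ ψ ih₁ ih₂ => simp only [MuF.compl, clF, ih₁, ih₂]
  | dia a φ ih => simp only [MuF.compl, clF, ih]
  | box a φ ih => simp only [MuF.compl, clF, ih]
  | mu X φ ih => simp only [MuF.compl, clF, unbar_bar, ih]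
  | nu X φ ih => simp only [MuF.compl, clF, unbar_bar, ih]

theorem clF_of_covered {e : V → Bool} {φ : MuF L 𝒳 Act V}
    (h : ∀ X ∈ φ.freeVars, e (unbar X) = true) : clF e φ = φ := by
  induction φ generalizing e with
  | lit p => rfl
  | var X => simp [clF, h X (by simp [MuF.freeVars])]
  | or φ ψ ih₁ ih₂ =>
    simp only [clF]
    rw [ih₁ (fun X hX => h X (Or.inl hX)), ih₂ (fun X hX => h X (Or.inr hX))]
  | and φ ψ ih₁ ih₂ =>
    simp only [clF]
    rw [ih₁ (fun X hX => h X (Or.inl hX)), ih₂ (fun X hX => h X (Or.inr hX))]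
  | dia a φ ih => simp only [clF]; rw [ih h]
  | box a φ ih => simp only [clF]; rw [ih h]
  | mu X φ ih =>
    simp only [clF]
    rw [ih ?_]
    intro Y hY
    by_cases hu : unbar Y = unbar X
    · rw [hu, Function.update_self]
    · rw [Function.update_of_ne hu]
      refine h Y ⟨hY, ?_⟩
      simp only [Set.mem_insert_iff, Set.mem_singleton_iff, not_or]
      constructor
      · rintro rfl; exact hu rfl
      · rintro rfl; exact hu (unbar_bar X)
  | nu X φ ih =>
    simp only [clF]
    rw [ih ?_]
    intro Y hY
    by_cases hu : unbar Y = unbar X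
    · rw [hu, Function.update_self]
    · rw [Function.update_of_ne hu]
      refine h Y ⟨hY, ?_⟩
      simp only [Set.mem_insert_iff, Set.mem_singleton_iff, not_or]
      constructor
      · rintro rfl; exact hu rfl
      · rintro rfl; exact hu (unbar_bar X)

theorem clF_of_closed {e : V → Bool} {φ : MuF L 𝒳 Act V}
    (h : φ.freeVars = ∅) : clF e φ = φ :=
  clF_of_covered (by rw [h]; simp)

theorem subst_not_free {X : V ⊕ V} {ψ φ : MuF L 𝒳 Act V}
    (h1 : X ∉ φ.freeVars) (h2 : bar X ∉ φ.freeVars) : MuF.subst X ψ φ = φ := by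
  induction φ with
  | lit p => rfl
  | var Y =>
    simp only [MuF.freeVars, Set.mem_singleton_iff] at h1 h2
    rw [MuF.subst, if_neg (fun hx => h1 hx.symm), if_neg ?_]
    intro hx
    exact h2 hx.symm
  | or φ₁ φ₂ ih₁ ih₂ =>
    simp only [MuF.freeVars, Set.mem_union, not_or] at h1 h2
    rw [MuF.subst, ih₁ h1.1 h2.1, ih₂ h1.2 h2.2]
  | and φ₁ φ₂ ih₁ ih₂ =>
    simp only [MuF.freeVars, Set.mem_union, not_or] at h1 h2
    rw [MuF.subst, ih₁ h1.1 h2.1, ih₂ h1.2 h2.2]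
  | dia a φ ih => rw [MuF.subst, ih h1 h2]
  | box a φ ih => rw [MuF.subst, ih h1 h2]
  | mu Y φ ih =>
    rw [MuF.subst]
    split_ifs with h
    · rfl
    · push_neg at h
      rw [ih ?_ ?_]
      · intro hx
        exact h1 ⟨hx, by simp only [Set.mem_insert_iff, Set.mem_singleton_iff]; tauto⟩
      · intro hx
        refine h2 ⟨hx, ?_⟩
        simp only [Set.mem_insert_iff, Set.mem_singleton_iff, not_or]
        constructor
        · intro hb; exact h.2 (by rw [← hb, bar_bar])
        · intro hb
          exact h.1 (by have := congrArg bar hb; rwa [bar_bar, bar_bar] at this)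
  | nu Y φ ih =>
    rw [MuF.subst]
    split_ifs with h
    · rfl
    · push_neg at h
      rw [ih ?_ ?_]
      · intro hx
        exact h1 ⟨hx, by simp only [Set.mem_insert_iff, Set.mem_singleton_iff]; tauto⟩
      · intro hx
        refine h2 ⟨hx, ?_⟩
        simp only [Set.mem_insert_iff, Set.mem_singleton_iff, not_or]
        constructor
        · intro hb; exact h.2 (by rw [← hb, bar_bar])
        · intro hb
          exact h.1 (by have := congrArg bar hb; rwa [bar_bar, bar_bar] at this)

theorem freeVars_subst_closed {X : V ⊕ V} {ψ : MuF L 𝒳 Act V}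
    (hc : ψ.freeVars = ∅) (hcc : ψ.compl.freeVars = ∅) (φ : MuF L 𝒳 Act V) :
    (MuF.subst X ψ φ).freeVars ⊆ φ.freeVars \ {X, bar X} := by
  induction φ with
  | lit p => simp [MuF.subst, MuF.freeVars]
  | var Y =>
    rw [MuF.subst]
    split_ifs with h1 h2
    · rw [hc]; simp
    · rw [hcc]; simp
    · intro W hW
      simp only [MuF.freeVars, Set.mem_singleton_iff] at hW
      subst hW
      refine ⟨by simp [MuF.freeVars], ?_⟩
      simp only [Set.mem_insert_iff, Set.mem_singleton_iff, not_or]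
      exact ⟨h1, h2⟩
  | or φ₁ φ₂ ih₁ ih₂ =>
    intro W hW
    rcases hW with hW | hW
    · exact ⟨Or.inl (ih₁ hW).1, (ih₁ hW).2⟩
    · exact ⟨Or.inr (ih₂ hW).1, (ih₂ hW).2⟩
  | and φ₁ φ₂ ih₁ ih₂ =>
    intro W hW
    rcases hW with hW | hW
    · exact ⟨Or.inl (ih₁ hW).1, (ih₁ hW).2⟩
    · exact ⟨Or.inr (ih₂ hW).1, (ih₂ hW).2⟩
  | dia a φ ih => exact ih
  | box a φ ih => exact ih
  | mu Y φ ih =>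
    rw [MuF.subst]
    split_ifs with h
    · intro W hW
      refine ⟨hW, ?_⟩
      have hWn := hW.2
      simp only [Set.mem_insert_iff, Set.mem_singleton_iff, not_or] at hWn ⊢
      rcases h with rfl | rfl
      · exact ⟨hWn.1, hWn.2⟩
      · exact ⟨hWn.2, by rw [bar_bar]; exact hWn.1⟩
    · rintro W ⟨hW, hWn⟩
      obtain ⟨h1, h2⟩ := ih hW
      exact ⟨⟨h1, hWn⟩, h2⟩
  | nu Y φ ih =>
    rw [MuF.subst]
    split_ifs with h
    · intro W hW
      refine ⟨hW, ?_⟩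
      have hWn := hW.2
      simp only [Set.mem_insert_iff, Set.mem_singleton_iff, not_or] at hWn ⊢
      rcases h with rfl | rfl
      · exact ⟨hWn.1, hWn.2⟩
      · exact ⟨hWn.2, by rw [bar_bar]; exact hWn.1⟩
    · rintro W ⟨hW, hWn⟩
      obtain ⟨h1, h2⟩ := ih hW
      exact ⟨⟨h1, hWn⟩, h2⟩

theorem clF_step {X : V ⊕ V} {e : V → Bool} (he : e (unbar X) = false)
    (φ : MuF L 𝒳 Act V) :
    clF e φ = clF (Function.update e (unbar X) true) (MuF.subst X (cF X) φ) := by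
  induction φ generalizing e with
  | lit p => rfl
  | var Y =>
    rw [MuF.subst]
    split_ifs with h1 h2
    · subst h1
      rw [clF_cF]
      simp [clF, he]
    · subst h2
      rw [compl_cF, clF_cF]
      simp [clF, unbar_bar, he]
    · have hu : unbar Y ≠ unbar X := unbar_ne_unbar h1 h2
      simp only [clF, Function.update_of_ne hu]
  | or φ₁ φ₂ ih₁ ih₂ => simp only [MuF.subst, clF]; rw [ih₁ he, ih₂ he]
  | and φ₁ φ₂ ih₁ ih₂ => simp only [MuF.subst, clF]; rw [ih₁ he, ih₂ he]
  | dia a φ ih => simp only [MuF.subst, clF]; rw [ih he]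
  | box a φ ih => simp only [MuF.subst, clF]; rw [ih he]
  | mu Y φ ih =>
    rw [MuF.subst]
    split_ifs with h
    · have hu : unbar X = unbar Y := by rw [unbar_eq_unbar]; exact h
      simp only [clF, hu, Function.update_idem]
    · push_neg at h
      have hu : unbar X ≠ unbar Y := unbar_ne_unbar h.1 h.2
      simp only [clF]
      rw [ih (e := Function.update e (unbar Y) true)
        (by rw [Function.update_of_ne hu]; exact he)]
      rw [Function.update_comm (Ne.symm hu)]
  | nu Y φ ih =>
    rw [MuF.subst]
    split_ifs with h
    · have hu : unbar X = unbar Y := by rw [unbar_eq_unbar]; exact h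
      simp only [clF, hu, Function.update_idem]
    · push_neg at h
      have hu : unbar X ≠ unbar Y := unbar_ne_unbar h.1 h.2
      simp only [clF]
      rw [ih (e := Function.update e (unbar Y) true)
        (by rw [Function.update_of_ne hu]; exact he)]
      rw [Function.update_comm (Ne.symm hu)]

theorem freeVars_finite (φ : MuF L 𝒳 Act V) : φ.freeVars.Finite := by
  induction φ with
  | lit p => exact Set.finite_empty
  | var X => exact Set.finite_singleton X
  | or φ ψ ih₁ ih₂ => exact ih₁.union ih₂
  | and φ ψ ih₁ ih₂ => exact ih₁.union ih₂
  | dia a φ ih => exact ih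
  | box a φ ih => exact ih
  | mu X φ ih => exact ih.diff
  | nu X φ ih => exact ih.diff

theorem muTaut_clF {φ : MuF L 𝒳 Act V} (ht : MuTaut φ) (e : V → Bool) :
    MuTaut (clF e φ) := by
  suffices h : ∀ (n : ℕ) (φ : MuF L 𝒳 Act V) (e : V → Bool),
      {X | X ∈ φ.freeVars ∧ e (unbar X) = false}.ncard ≤ n →
      MuTaut φ → MuTaut (clF e φ) by
    exact h _ φ e le_rfl ht
  intro n
  induction n with
  | zero =>
    intro φ e hcard ht
    have hfin : {X | X ∈ φ.freeVars ∧ e (unbar X) = false}.Finite :=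
      (freeVars_finite φ).subset (fun Y h => h.1)
    have hemp : {X | X ∈ φ.freeVars ∧ e (unbar X) = false} = ∅ :=
      (Set.ncard_eq_zero hfin).mp (Nat.le_zero.mp hcard)
    rw [clF_of_covered (fun X hX => ?_)]
    · exact ht
    · by_contra hc
      have : X ∈ ({X | X ∈ φ.freeVars ∧ e (unbar X) = false} : Set _) :=
        ⟨hX, by revert hc; cases e (unbar X) <;> simp⟩
      rw [hemp] at this
      exact this
  | succ n ihn =>
    intro φ e hcard ht
    by_cases hne : ∃ X ∈ φ.freeVars, e (unbar X) = false
    · obtain ⟨X, hX, heX⟩ := hne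
      rw [clF_step heX φ]
      refine ihn _ _ ?_ (MuTaut.subst X (cF X) ht)
      have hfin : {Y | Y ∈ φ.freeVars ∧ e (unbar Y) = false}.Finite :=
        (freeVars_finite φ).subset (fun Y h => h.1)
      have hsub : {Y | Y ∈ (MuF.subst X (cF X) φ).freeVars ∧
            (Function.update e (unbar X) true) (unbar Y) = false} ⊆
          {Y | Y ∈ φ.freeVars ∧ e (unbar Y) = false} \ {X} := by
        rintro Y ⟨hY1, hY2⟩
        have hYf := freeVars_subst_closed (freeVars_cF X)
          (by rw [compl_cF]; exact freeVars_cF _) φ hY1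
        have hu : unbar Y ≠ unbar X := by
          intro hu
          rw [hu, Function.update_self] at hY2
          exact absurd hY2 (by simp)
        rw [Function.update_of_ne hu] at hY2
        refine ⟨⟨hYf.1, hY2⟩, ?_⟩
        intro hYX
        simp only [Set.mem_singleton_iff] at hYX
        subst hYX
        exact hu rfl
      have hlt : {Y | Y ∈ (MuF.subst X (cF X) φ).freeVars ∧
            (Function.update e (unbar X) true) (unbar Y) = false}.ncard <
          {Y | Y ∈ φ.freeVars ∧ e (unbar Y) = false}.ncard :=
        lt_of_le_of_lt (Set.ncard_le_ncard hsub (hfin.diff))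
          (Set.ncard_diff_singleton_lt_of_mem ⟨hX, heX⟩ hfin)
      exact Nat.lt_succ_iff.mp (lt_of_lt_of_le hlt hcard)
    · push_neg at hne
      rw [clF_of_covered (fun X hX => ?_)]
      · exact ht
      · have := hne X hX
        revert this; cases e (unbar X) <;> simp




theorem freeFor_cF (X : V ⊕ V) (ψ : MuF L 𝒳 Act V) (Y : V ⊕ V) :
    MuF.FreeFor X ψ (cF Y) := by
  cases Y with
  | inl y =>
    show MuF.FreeFor X ψ (.mu (.inl y) (.var (.inl y)))
    by_cases h1 : X = Sum.inl y
    · exact Or.inl h1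
    by_cases h2 : X = bar (Sum.inl y)
    · exact Or.inr (Or.inl h2)
    refine Or.inr (Or.inr ⟨?_, trivial⟩)
    intro hmem
    exfalso
    rcases hmem with hm | hm
    · simp only [MuF.freeVars, Set.mem_singleton_iff] at hm
      exact h1 hm
    · simp only [MuF.freeVars, Set.mem_singleton_iff] at hm
      exact h2 (by have := congrArg bar hm; rwa [bar_bar] at this)
  | inr y =>
    show MuF.FreeFor X ψ (.nu (.inr y) (.var (.inr y)))
    by_cases h1 : X = Sum.inr y
    · exact Or.inl h1
    by_cases h2 : X = bar (Sum.inr y)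
    · exact Or.inr (Or.inl h2)
    refine Or.inr (Or.inr ⟨?_, trivial⟩)
    intro hmem
    exfalso
    rcases hmem with hm | hm
    · simp only [MuF.freeVars, Set.mem_singleton_iff] at hm
      exact h1 hm
    · simp only [MuF.freeVars, Set.mem_singleton_iff] at hm
      exact h2 (by have := congrArg bar hm; rwa [bar_bar] at this)

theorem freeFor_clF {X : V ⊕ V} {ψ ψ' : MuF L 𝒳 Act V}
    (hsub : ψ'.freeVars ⊆ ψ.freeVars) (φ : MuF L 𝒳 Act V) :
    ∀ (e : V → Bool), MuF.FreeFor X ψ φ → MuF.FreeFor X ψ' (clF e φ) := by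
  induction φ with
  | lit p => intro e _; trivial
  | var Y =>
    intro e _
    by_cases h : e (unbar Y)
    · rw [(show clF e (MuF.var Y) = MuF.var Y by simp [clF, h])]; trivial
    · rw [(show clF e (MuF.var Y) = cF Y by simp [clF, h])]
      exact freeFor_cF X ψ' Y
  | or φ₁ φ₂ ih₁ ih₂ => intro e h; exact ⟨ih₁ e h.1, ih₂ e h.2⟩
  | and φ₁ φ₂ ih₁ ih₂ => intro e h; exact ⟨ih₁ e h.1, ih₂ e h.2⟩
  | dia a φ ih => intro e h; exact ih e h
  | box a φ ih => intro e h; exact ih e h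
  | mu Z φ ih =>
    intro e h
    show MuF.FreeFor X ψ' (.mu Z (clF (Function.update e (unbar Z) true) φ))
    rcases h with h | h | ⟨cond, ff⟩
    · exact Or.inl h
    · exact Or.inr (Or.inl h)
    · refine Or.inr (Or.inr ⟨?_, ih _ ff⟩)
      intro hmem
      have hmem' : X ∈ φ.freeVars ∨ bar X ∈ φ.freeVars := by
        rcases hmem with hm | hm
        · exact Or.inl (freeVars_clF_subset _ _ hm)
        · exact Or.inr (freeVars_clF_subset _ _ hm)
      obtain ⟨hz1, hz2⟩ := cond hmem'
      exact ⟨fun hc => hz1 (hsub hc), fun hc => hz2 (hsub hc)⟩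
  | nu Z φ ih =>
    intro e h
    show MuF.FreeFor X ψ' (.nu Z (clF (Function.update e (unbar Z) true) φ))
    rcases h with h | h | ⟨cond, ff⟩
    · exact Or.inl h
    · exact Or.inr (Or.inl h)
    · refine Or.inr (Or.inr ⟨?_, ih _ ff⟩)
      intro hmem
      have hmem' : X ∈ φ.freeVars ∨ bar X ∈ φ.freeVars := by
        rcases hmem with hm | hm
        · exact Or.inl (freeVars_clF_subset _ _ hm)
        · exact Or.inr (freeVars_clF_subset _ _ hm)
      obtain ⟨hz1, hz2⟩ := cond hmem'
      exact ⟨fun hc => hz1 (hsub hc), fun hc => hz2 (hsub hc)⟩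

theorem freeFor_var {X Y : V ⊕ V} (φ : MuF L 𝒳 Act V)
    (hY : Y ∉ φ.mentions) (hbY : bar Y ∉ φ.mentions) :
    MuF.FreeFor X (.var Y) φ := by
  induction φ with
  | lit p => trivial
  | var Z => trivial
  | or φ₁ φ₂ ih₁ ih₂ =>
    simp only [MuF.mentions, Set.mem_union, not_or] at hY hbY
    exact ⟨ih₁ hY.1 hbY.1, ih₂ hY.2 hbY.2⟩
  | and φ₁ φ₂ ih₁ ih₂ =>
    simp only [MuF.mentions, Set.mem_union, not_or] at hY hbY
    exact ⟨ih₁ hY.1 hbY.1, ih₂ hY.2 hbY.2⟩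
  | dia a φ ih => exact ih hY hbY
  | box a φ ih => exact ih hY hbY
  | mu Z φ ih =>
    simp only [MuF.mentions, Set.mem_union, Set.mem_singleton_iff, not_or] at hY hbY
    refine Or.inr (Or.inr ⟨?_, ih hY.2 hbY.2⟩)
    intro _
    constructor
    · simp only [MuF.freeVars, Set.mem_singleton_iff]
      exact fun hz => hY.1 hz.symm
    · simp only [MuF.freeVars, Set.mem_singleton_iff]
      intro hz
      exact hbY.1 (by rw [← hz, bar_bar])
  | nu Z φ ih =>
    simp only [MuF.mentions, Set.mem_union, Set.mem_singleton_iff, not_or] at hY hbY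
    refine Or.inr (Or.inr ⟨?_, ih hY.2 hbY.2⟩)
    intro _
    constructor
    · simp only [MuF.freeVars, Set.mem_singleton_iff]
      exact fun hz => hY.1 hz.symm
    · simp only [MuF.freeVars, Set.mem_singleton_iff]
      intro hz
      exact hbY.1 (by rw [← hz, bar_bar])

theorem clF_subst {X : V ⊕ V} {ψ : MuF L 𝒳 Act V} (φ : MuF L 𝒳 Act V) :
    ∀ (e : V → Bool), MuF.FreeFor X ψ φ →
      clF e (MuF.subst X ψ φ) =
        MuF.subst X (clF e ψ) (clF (Function.update e (unbar X) true) φ) := by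
  induction φ with
  | lit p => intro e _; rfl
  | var Y =>
    intro e _
    rw [MuF.subst]
    split_ifs with h1 h2
    · subst h1
      rw [(show clF (Function.update e (unbar Y) true) (MuF.var Y) = MuF.var Y by
        simp [clF])]
      rw [MuF.subst, if_pos rfl]
    · subst h2
      rw [clF_var_pos (by rw [unbar_bar, Function.update_self])]
      rw [MuF.subst, if_neg (fun hc => bar_ne_self X hc), if_pos rfl]
      exact clF_compl e ψ
    · have hu : unbar Y ≠ unbar X := unbar_ne_unbar h1 h2
      rw [(show clF (Function.update e (unbar X) true) (MuF.var Y)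
          = clF e (MuF.var Y) by simp [clF, Function.update_of_ne hu])]
      by_cases h : e (unbar Y)
      · rw [(show clF e (MuF.var Y) = MuF.var Y by simp [clF, h]), MuF.subst,
          if_neg h1, if_neg h2]
      · rw [(show clF e (MuF.var Y) = cF Y by simp [clF, h]), subst_cF]
  | or φ₁ φ₂ ih₁ ih₂ =>
    intro e h
    show MuF.or _ _ = _
    rw [ih₁ e h.1, ih₂ e h.2]
    rfl
  | and φ₁ φ₂ ih₁ ih₂ =>
    intro e h
    show MuF.and _ _ = _
    rw [ih₁ e h.1, ih₂ e h.2]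
    rfl
  | dia a φ ih =>
    intro e h
    show MuF.dia a _ = _
    rw [ih e h]
    rfl
  | box a φ ih =>
    intro e h
    show MuF.box a _ = _
    rw [ih e h]
    rfl
  | mu Z φ ih =>
    intro e hff
    by_cases hXZ : X = Z ∨ X = bar Z
    · have hu : unbar X = unbar Z := unbar_eq_unbar.mpr hXZ
      rw [MuF.subst, if_pos hXZ]
      simp only [clF, hu, Function.update_idem]
      rw [MuF.subst, if_pos hXZ]
    · rcases hff with h | h | ⟨cond, ff⟩
      · exact absurd (Or.inl h) hXZ
      · exact absurd (Or.inr h) hXZ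
      have hXZ' := hXZ
      push_neg at hXZ'
      have hu : unbar X ≠ unbar Z := unbar_ne_unbar hXZ'.1 hXZ'.2
      rw [MuF.subst, if_neg hXZ]
      simp only [clF]
      rw [MuF.subst, if_neg hXZ]
      by_cases hfree : X ∈ φ.freeVars ∨ bar X ∈ φ.freeVars
      · obtain ⟨hz1, hz2⟩ := cond hfree
        rw [ih _ ff]
        rw [show clF (Function.update e (unbar Z) true) ψ = clF e ψ from
          clF_congr (fun W hW => Function.update_of_ne
            (unbar_ne_unbar (fun hc => hz1 (by rw [← hc]; exact hW))
              (fun hc => hz2 (by rw [← hc]; exact hW))) _ _)]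
        rw [Function.update_comm (Ne.symm hu)]
      · push_neg at hfree
        rw [subst_not_free hfree.1 hfree.2]
        rw [subst_not_free
          (fun hc => hfree.1 (freeVars_clF_subset _ _ hc))
          (fun hc => hfree.2 (freeVars_clF_subset _ _ hc))]
        refine congrArg _ (clF_congr ?_)
        intro W hW
        by_cases hz : unbar W = unbar Z
        · rw [hz, Function.update_self, Function.update_self]
        · have hwx : unbar W ≠ unbar X := unbar_ne_unbar
            (fun hc => hfree.1 (hc ▸ hW)) (fun hc => hfree.2 (hc ▸ hW))
          rw [Function.update_of_ne hz, Function.update_of_ne hz,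
            Function.update_of_ne hwx]
  | nu Z φ ih =>
    intro e hff
    by_cases hXZ : X = Z ∨ X = bar Z
    · have hu : unbar X = unbar Z := unbar_eq_unbar.mpr hXZ
      rw [MuF.subst, if_pos hXZ]
      simp only [clF, hu, Function.update_idem]
      rw [MuF.subst, if_pos hXZ]
    · rcases hff with h | h | ⟨cond, ff⟩
      · exact absurd (Or.inl h) hXZ
      · exact absurd (Or.inr h) hXZ
      have hXZ' := hXZ
      push_neg at hXZ'
      have hu : unbar X ≠ unbar Z := unbar_ne_unbar hXZ'.1 hXZ'.2
      rw [MuF.subst, if_neg hXZ]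
      simp only [clF]
      rw [MuF.subst, if_neg hXZ]
      by_cases hfree : X ∈ φ.freeVars ∨ bar X ∈ φ.freeVars
      · obtain ⟨hz1, hz2⟩ := cond hfree
        rw [ih _ ff]
        rw [show clF (Function.update e (unbar Z) true) ψ = clF e ψ from
          clF_congr (fun W hW => Function.update_of_ne
            (unbar_ne_unbar (fun hc => hz1 (by rw [← hc]; exact hW))
              (fun hc => hz2 (by rw [← hc]; exact hW))) _ _)]
        rw [Function.update_comm (Ne.symm hu)]
      · push_neg at hfree
        rw [subst_not_free hfree.1 hfree.2]
        rw [subst_not_free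
          (fun hc => hfree.1 (freeVars_clF_subset _ _ hc))
          (fun hc => hfree.2 (freeVars_clF_subset _ _ hc))]
        refine congrArg _ (clF_congr ?_)
        intro W hW
        by_cases hz : unbar W = unbar Z
        · rw [hz, Function.update_self, Function.update_self]
        · have hwx : unbar W ≠ unbar X := unbar_ne_unbar
            (fun hc => hfree.1 (hc ▸ hW)) (fun hc => hfree.2 (hc ▸ hW))
          rw [Function.update_of_ne hz, Function.update_of_ne hz,
            Function.update_of_ne hwx]

theorem aEq_clF {φ ψ : MuF L 𝒳 Act V} (h : AEq φ ψ) :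
    ∀ e : V → Bool, AEq (clF e φ) (clF e ψ) := by
  induction h with
  | refl φ => exact fun e => AEq.refl _
  | symm _ ih => exact fun e => AEq.symm (ih e)
  | trans _ _ ih₁ ih₂ => exact fun e => AEq.trans (ih₁ e) (ih₂ e)
  | or _ _ ih₁ ih₂ => exact fun e => AEq.or (ih₁ e) (ih₂ e)
  | and _ _ ih₁ ih₂ => exact fun e => AEq.and (ih₁ e) (ih₂ e)
  | dia a _ ih => exact fun e => AEq.dia a (ih e)
  | box a _ ih => exact fun e => AEq.box a (ih e)
  | mu X _ ih => exact fun e => AEq.mu X (ih _)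
  | nu X _ ih => exact fun e => AEq.nu X (ih _)
  | @muRename X Y φ hY hbY =>
    intro e
    have hffv : MuF.FreeFor X (.var Y) φ := freeFor_var φ hY hbY
    have h1 : clF (Function.update e (unbar Y) true) (MuF.subst X (.var Y) φ)
        = MuF.subst X (.var Y) (clF (Function.update e (unbar X) true) φ) := by
      rw [clF_subst φ _ hffv]
      congr 1
      · simp [clF]
      · refine clF_congr ?_
        intro W hW
        by_cases hz : unbar W = unbar X
        · rw [hz]; simp
        · have hWY : unbar W ≠ unbar Y := unbar_ne_unbar
            (fun hc => hY (hc ▸ freeVars_subset_mentions φ hW))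
            (fun hc => hbY (hc ▸ freeVars_subset_mentions φ hW))
          rw [Function.update_of_ne hz, Function.update_of_ne hz,
            Function.update_of_ne hWY]
    show AEq (.mu X (clF (Function.update e (unbar X) true) φ))
      (.mu Y (clF (Function.update e (unbar Y) true) (MuF.subst X (.var Y) φ)))
    rw [h1]
    exact AEq.muRename (fun hc => hY (mentions_clF _ _ hc))
      (fun hc => hbY (mentions_clF _ _ hc))
  | @nuRename X Y φ hY hbY =>
    intro e
    have hffv : MuF.FreeFor X (.var Y) φ := freeFor_var φ hY hbY
    have h1 : clF (Function.update e (unbar Y) true) (MuF.subst X (.var Y) φ)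
        = MuF.subst X (.var Y) (clF (Function.update e (unbar X) true) φ) := by
      rw [clF_subst φ _ hffv]
      congr 1
      · simp [clF]
      · refine clF_congr ?_
        intro W hW
        by_cases hz : unbar W = unbar X
        · rw [hz]; simp
        · have hWY : unbar W ≠ unbar Y := unbar_ne_unbar
            (fun hc => hY (hc ▸ freeVars_subset_mentions φ hW))
            (fun hc => hbY (hc ▸ freeVars_subset_mentions φ hW))
          rw [Function.update_of_ne hz, Function.update_of_ne hz,
            Function.update_of_ne hWY]
    show AEq (.nu X (clF (Function.update e (unbar X) true) φ))
      (.nu Y (clF (Function.update e (unbar Y) true) (MuF.subst X (.var Y) φ)))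
    rw [h1]
    exact AEq.nuRename (fun hc => hY (mentions_clF _ _ hc))
      (fun hc => hbY (mentions_clF _ _ hc))

theorem clF_imp (e : V → Bool) (φ ψ : MuF L 𝒳 Act V) :
    clF e (φ.imp ψ) = (clF e φ).imp (clF e ψ) := by
  simp only [MuF.imp, clF, clF_compl]

theorem clF_iff (e : V → Bool) (φ ψ : MuF L 𝒳 Act V) :
    clF e (φ.iff ψ) = (clF e φ).iff (clF e ψ) := by
  simp only [MuF.iff, MuF.imp, clF, clF_compl]

theorem mentions_compl_empty : ∀ {φ : MuF L 𝒳 Act V},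
    φ.mentions = ∅ → φ.compl.mentions = ∅ := by
  intro φ
  induction φ with
  | lit p => intro _; rfl
  | var X => intro h; exact absurd h (by simp [MuF.mentions])
  | or φ ψ ih₁ ih₂ =>
    intro h
    simp only [MuF.mentions, Set.union_empty_iff] at h
    simp only [MuF.compl, MuF.mentions, Set.union_empty_iff]
    exact ⟨ih₁ h.1, ih₂ h.2⟩
  | and φ ψ ih₁ ih₂ =>
    intro h
    simp only [MuF.mentions, Set.union_empty_iff] at h
    simp only [MuF.compl, MuF.mentions, Set.union_empty_iff]
    exact ⟨ih₁ h.1, ih₂ h.2⟩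
  | dia a φ ih => exact fun h => ih h
  | box a φ ih => exact fun h => ih h
  | mu X φ ih =>
    intro h
    exact absurd h (by simp only [MuF.mentions]; exact (Set.insert_nonempty _ _).ne_empty)
  | nu X φ ih =>
    intro h
    exact absurd h (by simp only [MuF.mentions]; exact (Set.insert_nonempty _ _).ne_empty)

theorem impChain_mentions {l : List (MuF L 𝒳 Act V)} {χ : MuF L 𝒳 Act V}
    (hl : ∀ φ ∈ l, φ.mentions = ∅) (hχ : χ.mentions = ∅) :
    (impChain l χ).mentions = ∅ := by
  induction l with
  | nil => exact hχ
  | cons φ t ih =>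
    show (MuF.or φ.compl (impChain t χ)).mentions = ∅
    show _ ∪ _ = ∅
    rw [mentions_compl_empty (hl φ (by simp)), ih (fun ψ hψ => hl ψ (by simp [hψ])),
      Set.union_empty]

theorem muEqAx_mentions {φ : MuF L 𝒳 Act V} (h : MuEqAx φ) : φ.mentions = ∅ := by
  induction h with
  | refl t => rfl
  | symm t₁ t₂ =>
    show (MuF.or _ _).mentions = ∅
    show _ ∪ _ = ∅
    simp [MuF.compl, MuF.mentions]
  | trans t₁ t₂ t₃ =>
    show (MuF.or _ (MuF.or _ _)).mentions = ∅
    simp [MuF.compl, MuF.mentions]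
  | congFun f ts ts' =>
    refine impChain_mentions ?_ rfl
    intro ψ hψ
    simp only [List.mem_map] at hψ
    obtain ⟨i, _, rfl⟩ := hψ
    rfl
  | congRel R ts ts' =>
    refine impChain_mentions ?_ ?_
    · intro ψ hψ
      simp only [List.mem_map] at hψ
      obtain ⟨i, _, rfl⟩ := hψ
      rfl
    · show (MuF.or _ _).mentions = ∅
      simp [MuF.compl, MuF.mentions]

end MuClosing

section MuClosingC

variable {L : Language} {𝒳 V A₀ : Type*} [DecidableEq 𝒳] [DecidableEq V]

theorem osub_cF (x : 𝒳) (θ : L.Term 𝒳) (X : V ⊕ V) :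
    MuF.osub x θ (cF X : MuF L 𝒳 (CAct L 𝒳 A₀) V) = cF X := by
  cases X <;> rfl

theorem oswap_cF (sw : 𝒳 → 𝒳 → A₀ → A₀) (x y : 𝒳) (X : V ⊕ V) :
    MuF.oswap sw x y (cF X : MuF L 𝒳 (CAct L 𝒳 A₀) V) = cF X := by
  cases X <;> rfl

theorem clF_osub (x : 𝒳) (θ : L.Term 𝒳) (φ : MuF L 𝒳 (CAct L 𝒳 A₀) V) :
    ∀ e : V → Bool, clF e (MuF.osub x θ φ) = MuF.osub x θ (clF e φ) := by
  induction φ with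
  | lit p => intro e; rfl
  | var X =>
    intro e
    by_cases h : e (unbar X) <;>
      simp [clF, MuF.osub, h, osub_cF]
  | or φ₁ φ₂ ih₁ ih₂ => intro e; simp only [MuF.osub, clF, ih₁, ih₂]
  | and φ₁ φ₂ ih₁ ih₂ => intro e; simp only [MuF.osub, clF, ih₁, ih₂]
  | dia a φ ih =>
    intro e
    by_cases hb : a.bindsB x <;> simp [MuF.osub, clF, hb, ih]
  | box a φ ih =>
    intro e
    by_cases hb : a.bindsB x <;> simp [MuF.osub, clF, hb, ih]
  | mu X φ ih => intro e; simp only [MuF.osub, clF, ih]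
  | nu X φ ih => intro e; simp only [MuF.osub, clF, ih]

theorem clF_oswap (sw : 𝒳 → 𝒳 → A₀ → A₀) (x y : 𝒳) (φ : MuF L 𝒳 (CAct L 𝒳 A₀) V) :
    ∀ e : V → Bool, clF e (MuF.oswap sw x y φ) = MuF.oswap sw x y (clF e φ) := by
  induction φ with
  | lit p => intro e; rfl
  | var X =>
    intro e
    by_cases h : e (unbar X) <;>
      simp [clF, MuF.oswap, h, oswap_cF]
  | or φ₁ φ₂ ih₁ ih₂ => intro e; simp only [MuF.oswap, clF, ih₁, ih₂]
  | and φ₁ φ₂ ih₁ ih₂ => intro e; simp only [MuF.oswap, clF, ih₁, ih₂]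
  | dia a φ ih => intro e; simp only [MuF.oswap, clF, ih]
  | box a φ ih => intro e; simp only [MuF.oswap, clF, ih]
  | mu X φ ih => intro e; simp only [MuF.oswap, clF, ih]
  | nu X φ ih => intro e; simp only [MuF.oswap, clF, ih]

theorem ovarsF_cF (fvB : A₀ → Set 𝒳) (X : V ⊕ V) :
    (cF X : MuF L 𝒳 (CAct L 𝒳 A₀) V).ovarsF fvB = ∅ := by
  cases X <;> rfl

theorem ovarsF_clF (fvB : A₀ → Set 𝒳) (e : V → Bool) (φ : MuF L 𝒳 (CAct L 𝒳 A₀) V) :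
    (clF e φ).ovarsF fvB = φ.ovarsF fvB := by
  induction φ generalizing e with
  | lit p => rfl
  | var X =>
    by_cases h : e (unbar X) <;> simp [clF, MuF.ovarsF, h, ovarsF_cF]
  | or φ₁ φ₂ ih₁ ih₂ => simp only [clF, MuF.ovarsF, ih₁, ih₂]
  | and φ₁ φ₂ ih₁ ih₂ => simp only [clF, MuF.ovarsF, ih₁, ih₂]
  | dia a φ ih => simp only [clF, MuF.ovarsF, ih]
  | box a φ ih => simp only [clF, MuF.ovarsF, ih]
  | mu X φ ih => simp only [clF, MuF.ovarsF, ih]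
  | nu X φ ih => simp only [clF, MuF.ovarsF, ih]

theorem obindsC_cF (X : V ⊕ V) :
    (cF X : MuF L 𝒳 (CAct L 𝒳 A₀) V).obindsC = ∅ := by
  cases X <;> rfl

theorem obindsC_clF (e : V → Bool) (φ : MuF L 𝒳 (CAct L 𝒳 A₀) V) :
    (clF e φ).obindsC = φ.obindsC := by
  induction φ generalizing e with
  | lit p => rfl
  | var X =>
    by_cases h : e (unbar X) <;> simp [clF, MuF.obindsC, h, obindsC_cF]
  | or φ₁ φ₂ ih₁ ih₂ => simp only [clF, MuF.obindsC, ih₁, ih₂]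
  | and φ₁ φ₂ ih₁ ih₂ => simp only [clF, MuF.obindsC, ih₁, ih₂]
  | dia a φ ih => simp only [clF, MuF.obindsC, ih]
  | box a φ ih => simp only [clF, MuF.obindsC, ih]
  | mu X φ ih => simp only [clF, MuF.obindsC, ih]
  | nu X φ ih => simp only [clF, MuF.obindsC, ih]

theorem baseActs_cF (X : V ⊕ V) :
    (cF X : MuF L 𝒳 (CAct L 𝒳 A₀) V).baseActs = ∅ := by
  cases X <;> rfl

theorem baseActs_clF (e : V → Bool) (φ : MuF L 𝒳 (CAct L 𝒳 A₀) V) :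
    (clF e φ).baseActs = φ.baseActs := by
  induction φ generalizing e with
  | lit p => rfl
  | var X =>
    by_cases h : e (unbar X) <;> simp [clF, MuF.baseActs, h, baseActs_cF]
  | or φ₁ φ₂ ih₁ ih₂ => simp only [clF, MuF.baseActs, ih₁, ih₂]
  | and φ₁ φ₂ ih₁ ih₂ => simp only [clF, MuF.baseActs, ih₁, ih₂]
  | dia a φ ih => simp only [clF, MuF.baseActs, ih]
  | box a φ ih => simp only [clF, MuF.baseActs, ih]
  | mu X φ ih => simp only [clF, MuF.baseActs, ih]
  | nu X φ ih => simp only [clF, MuF.baseActs, ih]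

/-- Key lemma: every derivation of `χ` (with unconstrained side formulas) yields a
derivation of the closure of `χ` all of whose formulas are closed. -/
theorem muPrvIn_clF {L : Language} {𝒳 V A₀ : Type*} [DecidableEq 𝒳] [DecidableEq V]
    (sw : 𝒳 → 𝒳 → A₀ → A₀) (fvB : A₀ → Set 𝒳)
    {χ : MuF L 𝒳 (CAct L 𝒳 A₀) V}
    (h : MuPrvIn sw fvB Set.univ (∅ : Set (MuF L 𝒳 (CAct L 𝒳 A₀) V)) χ) :
    MuPrvIn sw fvB {ψ : MuF L 𝒳 (CAct L 𝒳 A₀) V | ψ.freeVars = ∅}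
      (∅ : Set (MuF L 𝒳 (CAct L 𝒳 A₀) V)) (clF (fun _ => false) χ) := by
  induction h with
  | @hyp b hT hS => exact absurd hT (Set.notMem_empty _)
  | @taut b ht hwf hS =>
    exact MuPrvIn.taut (muTaut_clF ht _) (wf_clF _ hwf) (clF_closed _)
  | @eqax b hax hS =>
    have hfv : b.freeVars = ∅ :=
      Set.eq_empty_of_subset_empty
        (by rw [← muEqAx_mentions hax]; exact freeVars_subset_mentions b)
    rw [clF_of_closed hfv]
    exact MuPrvIn.eqax hax hfv
  | @mufix X b hwf hff hS =>
    have heq : clF (fun _ => false) ((MuF.subst X (.mu X b) b).iff (.mu X b))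
        = (MuF.subst X (.mu X (clF (Function.update (fun _ => false) (unbar X) true) b))
            (clF (Function.update (fun _ => false) (unbar X) true) b)).iff
          (.mu X (clF (Function.update (fun _ => false) (unbar X) true) b)) := by
      rw [clF_iff, clF_subst b _ hff]
      simp only [clF]
    rw [heq]
    refine MuPrvIn.mufix ?_ ?_ (heq ▸ clF_closed _)
    · have := wf_clF (fun _ => false) hwf
      simpa only [clF] using this
    · refine freeFor_clF ?_ b _ hff
      intro W hW
      simp only [MuF.freeVars, Set.mem_diff] at hW ⊢
      exact ⟨freeVars_clF_subset _ _ hW.1, hW.2⟩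
  | @existsI x θ b hwf hadm hS =>
    have heq : clF (fun _ => false) ((MuF.osub x θ b).imp (.dia (.rand x) b))
        = ((clF (fun _ => false) b).osub x θ).imp
            (.dia (.rand x) (clF (fun _ => false) b)) := by
      rw [clF_imp, clF_osub]
      simp only [clF]
    rw [heq]
    refine MuPrvIn.existsI (wf_clF _ hwf) ?_ (heq ▸ clF_closed _)
    rcases hadm with h | ⟨h1, h2, h3⟩
    · exact Or.inl (by rw [ovarsF_clF]; exact h)
    · exact Or.inr ⟨by rw [baseActs_clF]; exact h1,
        fun y hy => by rw [obindsC_clF]; exact h2 y hy, clF_closed _⟩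
  | @vac x b hwf hov hfv hS =>
    have heq : clF (fun _ => false) ((MuF.dia (.rand x) b).imp b)
        = (MuF.dia (.rand x) (clF (fun _ => false) b)).imp (clF (fun _ => false) b) := by
      rw [clF_imp]
      simp only [clF]
    rw [heq]
    exact MuPrvIn.vac (wf_clF _ hwf) (by rw [ovarsF_clF]; exact hov)
      (clF_closed _) (heq ▸ clF_closed _)
  | @asgn x y θ b hwf hyx hyθ hyov hfv hS =>
    have heq : clF (fun _ => false) ((MuF.dia (.asn x θ) b).iff
          (.dia (.rand y) (.and (.lit (.eq (.var y) θ)) (b.oswap sw x y))))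
        = (MuF.dia (.asn x θ) (clF (fun _ => false) b)).iff
          (.dia (.rand y) (.and (.lit (.eq (.var y) θ))
            ((clF (fun _ => false) b).oswap sw x y))) := by
      rw [clF_iff]
      simp only [clF, clF_oswap]
    rw [heq]
    exact MuPrvIn.asgn (wf_clF _ hwf) hyx hyθ (by rw [ovarsF_clF]; exact hyov)
      (clF_closed _) (heq ▸ clF_closed _)
  | @mp b ψ h1 h2 hS ih1 ih2 =>
    rw [clF_imp] at ih1
    exact MuPrvIn.mp ih1 ih2 (clF_closed _)
  | @mono a ψ b h1 hS ih1 =>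
    have heq : clF (fun _ => false) ((MuF.dia a ψ).imp (.dia a b))
        = (MuF.dia a (clF (fun _ => false) ψ)).imp
            (.dia a (clF (fun _ => false) b)) := by
      rw [clF_imp]
      simp only [clF]
    rw [heq]
    rw [clF_imp] at ih1
    exact MuPrvIn.mono a ih1 (heq ▸ clF_closed _)
  | @fpmu X ψb b hff hwf h1 hS ih1 =>
    have heq : clF (fun _ => false) ((MuF.mu X ψb).imp b)
        = (MuF.mu X (clF (Function.update (fun _ => false) (unbar X) true) ψb)).imp
            (clF (fun _ => false) b) := by
      rw [clF_imp]
      simp only [clF]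
    rw [heq]
    refine MuPrvIn.fpmu ?_ ?_ ?_ (heq ▸ clF_closed _)
    · exact freeFor_clF (freeVars_clF_subset _ _) ψb _ hff
    · have := wf_clF (fun _ => false) hwf
      simpa only [clF] using this
    · rw [clF_imp, clF_subst ψb _ hff] at ih1
      exact ih1
  | @alpha a1 a2 hae h1 hS ih1 =>
    exact MuPrvIn.alpha (aEq_clF hae _) ih1 (clF_closed _)

end MuClosingC


/-- if `φ` is an `Lμ`-formula (without free propositional variables)
with `⊢_Lμ φ`, then there is a derivation of `φ` consisting only of `Lμ`-formulas,
i.e. a derivation in which no formula has a free propositional variable. -/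
theorem mu_closed_derivation (L : Language) (𝒳 V A₀ : Type*)
    [DecidableEq 𝒳] [DecidableEq V]
    (sw : 𝒳 → 𝒳 → A₀ → A₀) (fvB : A₀ → Set 𝒳)
    (φ : MuF L 𝒳 (CAct L 𝒳 A₀) V) (hWF : φ.WF) (hcl : φ.freeVars = ∅)
    (h : MuPrv sw fvB (∅ : Set (MuF L 𝒳 (CAct L 𝒳 A₀) V)) φ) :
    MuPrvIn sw fvB {ψ : MuF L 𝒳 (CAct L 𝒳 A₀) V | ψ.freeVars = ∅}
      (∅ : Set (MuF L 𝒳 (CAct L 𝒳 A₀) V)) φ := by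
  have h2 := muPrvIn_clF sw fvB h
  rwa [clF_of_closed hcl] at h2

end GLMu
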